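/- arXiv:1409.7535 — 4 statements merged into one kernel-verified Lean document; each statement's English description precedes it below -/
import Mathlib

section
/- Let m ≥ 1, k ≥ 3, and let D be a (k,m)-critical oriented graph on n vertices in which every vertex v satisfies d⁺(v) = d⁻(v) = (k-1)m. Then there exist vertices u_1, …, u_{m+1}, u_n of D such that u_1, …, u_{m+1} are all out-neighbors or all in-neighbors of u_n, and the subdigraph induced by V(D) \ {u_1, …, u_{m+1}} is weakly connected. -/
open Finset

variable {V : Type*}

section Defs
variable [Fintype V] [DecidableEq V]

/-- Number of out-neighbors of `v` inside the vertex set `S`. -/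
def outDegOn (A : V → V → Prop) [DecidableRel A] (S : Finset V) (v : V) : ℕ :=
  (S.filter (fun w => A v w)).card

/-- Number of in-neighbors of `v` inside the vertex set `S`. -/
def inDegOn (A : V → V → Prop) [DecidableRel A] (S : Finset V) (v : V) : ℕ :=
  (S.filter (fun w => A w v)).card

/-- The induced subdigraph on `S` is weakly `m`-degenerate: every nonempty induced
subdigraph has a vertex of out-degree `< m` or in-degree `< m`. -/
def WeaklyDegOn (A : V → V → Prop) [DecidableRel A] (m : ℕ) (S : Finset V) : Prop :=
  ∀ T ⊆ S, T.Nonempty → ∃ v ∈ T, outDegOn A T v < m ∨ inDegOn A T v < m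

/-- The induced subdigraph on `S` has no directed cycle. -/
def AcyclicOn (A : V → V → Prop) (S : Finset V) : Prop :=
  ¬ ∃ v ∈ S, Relation.TransGen (fun x y => x ∈ S ∧ y ∈ S ∧ A x y) v v

/-- The `m`-degenerate chromatic number of the subdigraph induced on `S`. -/
noncomputable def chiDegOn (A : V → V → Prop) [DecidableRel A] (m : ℕ) (S : Finset V) : ℕ :=
  sInf {k | ∃ c : V → Fin k, ∀ i, WeaklyDegOn A m (S.filter (fun v => c v = i))}

/-- The acyclic (dichromatic) number of the subdigraph induced on `S`. -/
noncomputable def chiAcyclicOn (A : V → V → Prop) (S : Finset V) : ℕ :=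
  sInf {k | ∃ c : V → Fin k, ∀ i, AcyclicOn A (S.filter (fun v => c v = i))}

/-- `Δ̄(D)`: the maximum over vertices of the arithmetic mean of out- and in-degree. -/
def barDelta (A : V → V → Prop) [DecidableRel A] : ℚ :=
  ((Finset.univ.sup (fun v => outDegOn A Finset.univ v + inDegOn A Finset.univ v) : ℕ) : ℚ) / 2

/-- `Δ̄` of the subdigraph induced on `S`. -/
def barDeltaOn (A : V → V → Prop) [DecidableRel A] (S : Finset V) : ℚ :=
  ((S.sup (fun v => outDegOn A S v + inDegOn A S v) : ℕ) : ℚ) / 2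

end Defs

/-- The subdigraph induced on `S` is weakly connected (underlying undirected graph
is connected). -/
def WeaklyConnectedOn (A : V → V → Prop) (S : Finset V) : Prop :=
  ∀ x ∈ S, ∀ y ∈ S,
    Relation.ReflTransGen (fun a b => a ∈ S ∧ b ∈ S ∧ (A a b ∨ A b a)) x y

/-- An oriented graph: no directed 2-cycles (and hence no loops). -/
def Oriented (A : V → V → Prop) : Prop := ∀ x y, A x y → ¬ A y x

/-- An induced directed 4-cycle a→b→c→d→a (no reversed edges on the cycle). -/
def CyclePattern (A : V → V → Prop) (a b c d : V) : Prop :=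
  A a b ∧ A b c ∧ A c d ∧ A d a ∧ ¬A b a ∧ ¬A c b ∧ ¬A d c ∧ ¬A a d

/-- F₁: induced directed 4-cycle with no chords. -/
def F1Pattern (A : V → V → Prop) (a b c d : V) : Prop :=
  CyclePattern A a b c d ∧ ¬A b d ∧ ¬A d b ∧ ¬A c a ∧ ¬A a c

/-- F₂: induced directed 4-cycle plus the chord b→d. -/
def F2Pattern (A : V → V → Prop) (a b c d : V) : Prop :=
  CyclePattern A a b c d ∧ A b d ∧ ¬A d b ∧ ¬A c a ∧ ¬A a c

/-- G₁: induced directed 4-cycle plus the chord c→a. -/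
def G1Pattern (A : V → V → Prop) (a b c d : V) : Prop :=
  CyclePattern A a b c d ∧ ¬A b d ∧ ¬A d b ∧ A c a ∧ ¬A a c

/-- G₂: induced directed 4-cycle plus both chords b→d and c→a. -/
def G2Pattern (A : V → V → Prop) (a b c d : V) : Prop :=
  CyclePattern A a b c d ∧ A b d ∧ ¬A d b ∧ A c a ∧ ¬A a c

/-- `D` contains none of F₁, F₂, G₁, G₂ as an induced subdigraph. -/
def AvoidsFG (A : V → V → Prop) : Prop :=
  ¬ ∃ a b c d : V, a ≠ b ∧ a ≠ c ∧ a ≠ d ∧ b ≠ c ∧ b ≠ d ∧ c ≠ d ∧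
    (F1Pattern A a b c d ∨ F2Pattern A a b c d ∨ G1Pattern A a b c d ∨ G2Pattern A a b c d)

section Count
variable [Fintype V] [DecidableEq V]

/-- `e(S,T)`: the number of edges pointing from `S` to `T`. -/
def eCount (A : V → V → Prop) [DecidableRel A] (S T : Finset V) : ℕ :=
  ∑ x ∈ S, (T.filter (fun y => A x y)).card

/-- The quantity `f(V₁,…,V_s)` from Catlin's argument. -/
def fval (A : V → V → Prop) [DecidableRel A] {s : ℕ} (Δ : Fin s → ℕ)
    (P : Fin s → Finset V) : ℚ :=
  ∑ i, (Δ i : ℚ) * (P i).card +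
    (1/2) * ∑ i, ∑ j ∈ Finset.univ.filter (fun j => i < j),
      ((eCount A (P i) (P j) : ℚ) + (eCount A (P j) (P i) : ℚ))

end Count

section Aux

variable [Fintype V] [DecidableEq V]

private lemma aux_subsingleton_deg (A : V → V → Prop) [DecidableRel A] (m : ℕ) (hm : 1 ≤ m)
    (hirr : ∀ v, ¬ A v v) (S : Finset V) (hS : ∀ a ∈ S, ∀ b ∈ S, a = b) :
    WeaklyDegOn A m S := by
  intro T hT hTne
  obtain ⟨v, hv⟩ := hTne
  refine ⟨v, hv, Or.inl ?_⟩
  have hempty : T.filter (fun w => A v w) = ∅ := by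
    ext b
    simp only [Finset.mem_filter, Finset.notMem_empty, iff_false, not_and]
    intro hb hab
    have hvb : v = b := hS v (hT hv) b (hT hb)
    exact hirr v (hvb ▸ hab)
  rw [outDegOn, hempty]
  simp only [Finset.card_empty]; omega

private lemma aux_exists_coloring (A : V → V → Prop) [DecidableRel A] (m : ℕ) (hm : 1 ≤ m)
    (hirr : ∀ v, ¬ A v v) (S : Finset V) :
    ∃ c : V → Fin (chiDegOn A m S), ∀ i, WeaklyDegOn A m (S.filter (fun v => c v = i)) := by
  have hne : {k | ∃ c : V → Fin k, ∀ i, WeaklyDegOn A m (S.filter (fun v => c v = i))}.Nonempty := by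
    refine ⟨Fintype.card V, ⟨fun v => Fintype.equivFin V v, fun i => aux_subsingleton_deg A m hm hirr _ ?_⟩⟩
    intro a ha b hb
    simp only [Finset.mem_filter] at ha hb
    exact (Fintype.equivFin V).injective (ha.2.trans hb.2.symm)
  exact Nat.sInf_mem hne

end Aux

theorem stmt6 [Fintype V] [DecidableEq V] (A : V → V → Prop) [DecidableRel A]
    (m k : ℕ) (hm : 1 ≤ m) (hk : 3 ≤ k) (hor : Oriented A)
    (hchi : chiDegOn A m Finset.univ = k)
    (hcrit : ∀ v : V, chiDegOn A m (Finset.univ.erase v) < k)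
    (hdeg : ∀ v : V, outDegOn A Finset.univ v = (k - 1) * m ∧
      inDegOn A Finset.univ v = (k - 1) * m) :
    ∃ (u : Fin (m + 1) → V) (w : V), Function.Injective u ∧ (∀ i, u i ≠ w) ∧
      ((∀ i, A w (u i)) ∨ (∀ i, A (u i) w)) ∧
      WeaklyConnectedOn A (Finset.univ \ Finset.image u Finset.univ) := by
  classical
  have hirr : ∀ v : V, ¬ A v v := fun v h => hor v v h h
  have hNP : ∀ v : V, (Finset.univ.filter (fun z => A v z)).card = (k - 1) * m :=
    fun v => (hdeg v).1
  have hNM : ∀ v : V, (Finset.univ.filter (fun z => A z v)).card = (k - 1) * m :=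
    fun v => (hdeg v).2
  have h2m : 2 * m ≤ (k - 1) * m := Nat.mul_le_mul_right m (by omega)
  have hq2 : m + 1 ≤ (k - 1) * m := by omega
  have hVne : Nonempty V := by
    by_contra hVe
    rw [not_nonempty_iff] at hVe
    have h0 : (0 : ℕ) ∈ {K | ∃ c : V → Fin K, ∀ i, WeaklyDegOn A m (Finset.univ.filter (fun v => c v = i))} :=
      ⟨fun v => (hVe.elim v), fun i => i.elim0⟩
    have hz : chiDegOn A m (Finset.univ : Finset V) = 0 := Nat.le_zero.mp (Nat.sInf_le h0)
    rw [hchi] at hz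
    omega
  -- Step 1: the whole digraph is weakly connected
  have hconn : ∀ z w : V, Relation.ReflTransGen
      (fun a b => a ∈ (Finset.univ : Finset V) ∧ b ∈ (Finset.univ : Finset V) ∧ (A a b ∨ A b a)) z w := by
    have hWC : WeaklyConnectedOn A (Finset.univ : Finset V) := by
      by_contra hnc
      unfold WeaklyConnectedOn at hnc
      push_neg at hnc
      obtain ⟨x, hx, y, hy, hxy⟩ := hnc
      set C : Finset V := Finset.univ.filter (fun v => Relation.ReflTransGen
        (fun a b => a ∈ (Finset.univ : Finset V) ∧ b ∈ (Finset.univ : Finset V) ∧ (A a b ∨ A b a)) x v) with hCdef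
      have hxC : x ∈ C := Finset.mem_filter.2 ⟨Finset.mem_univ _, Relation.ReflTransGen.refl⟩
      have hyC : y ∉ C := fun h => hxy (Finset.mem_filter.1 h).2
      have hCcl : ∀ a ∈ C, ∀ b : V, (A a b ∨ A b a) → b ∈ C := by
        intro a ha b hab
        exact Finset.mem_filter.2 ⟨Finset.mem_univ _,
          (Finset.mem_filter.1 ha).2.tail ⟨Finset.mem_univ _, Finset.mem_univ _, hab⟩⟩
      obtain ⟨c₁, hc₁⟩ := aux_exists_coloring A m hm hirr (Finset.univ.erase y)
      obtain ⟨c₂, hc₂⟩ := aux_exists_coloring A m hm hirr (Finset.univ.erase x)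
      have hk₁ : chiDegOn A m (Finset.univ.erase y) ≤ k - 1 := by have := hcrit y; omega
      have hk₂ : chiDegOn A m (Finset.univ.erase x) ≤ k - 1 := by have := hcrit x; omega
      have hmem : (k - 1) ∈ {K | ∃ c : V → Fin K, ∀ i, WeaklyDegOn A m (Finset.univ.filter (fun v => c v = i))} := by
        refine ⟨fun v => if v ∈ C then Fin.castLE hk₁ (c₁ v) else Fin.castLE hk₂ (c₂ v), fun i => ?_⟩
        intro T hT hTne
        by_cases hsplit : ∃ v ∈ T, v ∈ C
        · obtain ⟨v₀, hv₀T, hv₀C⟩ := hsplit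
          have hcv₀ : Fin.castLE hk₁ (c₁ v₀) = i := by
            have h := (Finset.mem_filter.1 (hT hv₀T)).2
            beta_reduce at h
            rwa [if_pos hv₀C] at h
          have hival : (i : ℕ) < chiDegOn A m (Finset.univ.erase y) := by
            rw [← hcv₀]
            simp only [Fin.coe_castLE]
            exact (c₁ v₀).isLt
          set T₁ := T.filter (fun v => v ∈ C) with hT₁def
          have hT₁sub : T₁ ⊆ (Finset.univ.erase y).filter (fun v => c₁ v = ⟨(i : ℕ), hival⟩) := by
            intro v hv
            obtain ⟨hvT, hvC⟩ := Finset.mem_filter.1 hv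
            have hcv : Fin.castLE hk₁ (c₁ v) = i := by
              have h := (Finset.mem_filter.1 (hT hvT)).2
              beta_reduce at h
              rwa [if_pos hvC] at h
            refine Finset.mem_filter.2 ⟨Finset.mem_erase.2 ⟨fun h => hyC (h ▸ hvC), Finset.mem_univ _⟩, ?_⟩
            apply Fin.ext
            simpa using congrArg Fin.val hcv
          obtain ⟨v, hvT₁, hvdeg⟩ := hc₁ ⟨(i : ℕ), hival⟩ T₁ hT₁sub
            ⟨v₀, Finset.mem_filter.2 ⟨hv₀T, hv₀C⟩⟩
          have hvC : v ∈ C := (Finset.mem_filter.1 hvT₁).2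
          have hfo : T.filter (fun b => A v b) = T₁.filter (fun b => A v b) := by
            ext b
            simp only [hT₁def, Finset.mem_filter]
            constructor
            · rintro ⟨hb, hab⟩
              exact ⟨⟨hb, hCcl v hvC b (Or.inl hab)⟩, hab⟩
            · rintro ⟨⟨hb, _⟩, hab⟩
              exact ⟨hb, hab⟩
          have hfi : T.filter (fun b => A b v) = T₁.filter (fun b => A b v) := by
            ext b
            simp only [hT₁def, Finset.mem_filter]
            constructor
            · rintro ⟨hb, hab⟩
              exact ⟨⟨hb, hCcl v hvC b (Or.inr hab)⟩, hab⟩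
            · rintro ⟨⟨hb, _⟩, hab⟩
              exact ⟨hb, hab⟩
          refine ⟨v, (Finset.mem_filter.1 hvT₁).1, ?_⟩
          rcases hvdeg with h | h
          · refine Or.inl ?_
            rw [outDegOn] at h ⊢
            rw [hfo]
            exact h
          · refine Or.inr ?_
            rw [inDegOn] at h ⊢
            rw [hfi]
            exact h
        · have hallout : ∀ v ∈ T, v ∉ C := fun v hv hvC => hsplit ⟨v, hv, hvC⟩
          obtain ⟨v₀, hv₀T⟩ := hTne
          have hcv₀ : Fin.castLE hk₂ (c₂ v₀) = i := by
            have h := (Finset.mem_filter.1 (hT hv₀T)).2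
            beta_reduce at h
            rwa [if_neg (hallout v₀ hv₀T)] at h
          have hival : (i : ℕ) < chiDegOn A m (Finset.univ.erase x) := by
            rw [← hcv₀]
            simp only [Fin.coe_castLE]
            exact (c₂ v₀).isLt
          have hTsub : T ⊆ (Finset.univ.erase x).filter (fun v => c₂ v = ⟨(i : ℕ), hival⟩) := by
            intro v hv
            have hvC := hallout v hv
            have hcv : Fin.castLE hk₂ (c₂ v) = i := by
              have h := (Finset.mem_filter.1 (hT hv)).2
              beta_reduce at h
              rwa [if_neg hvC] at h
            refine Finset.mem_filter.2 ⟨Finset.mem_erase.2 ⟨fun h => hvC (h ▸ hxC), Finset.mem_univ _⟩, ?_⟩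
            apply Fin.ext
            simpa using congrArg Fin.val hcv
          exact hc₂ ⟨(i : ℕ), hival⟩ T hTsub ⟨v₀, hv₀T⟩
      have hle : chiDegOn A m (Finset.univ : Finset V) ≤ k - 1 := Nat.sInf_le hmem
      rw [hchi] at hle
      omega
    intro z w
    exact hWC z (Finset.mem_univ z) w (Finset.mem_univ w)
  -- Step 2 : contradiction machinery
  by_contra hcon
  have hfail : ∀ (w : V) (U : Finset V), U.card = m + 1 →
      (U ⊆ Finset.univ.filter (fun z => A w z) ∨ U ⊆ Finset.univ.filter (fun z => A z w)) →
      ¬ WeaklyConnectedOn A (Finset.univ \ U) := by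
    intro w U hUcard hUside hWC
    apply hcon
    have e := Finset.equivFinOfCardEq hUcard
    refine ⟨fun i => ((e.symm i : V)), w, ?_, ?_, ?_, ?_⟩
    · intro i j hij
      exact e.symm.injective (Subtype.coe_injective hij)
    · intro i heq
      rcases hUside with h | h
      · exact hirr w (heq ▸ (Finset.mem_filter.1 (h (e.symm i).2)).2)
      · exact hirr w (heq ▸ (Finset.mem_filter.1 (h (e.symm i).2)).2)
    · rcases hUside with h | h
      · exact Or.inl fun i => (Finset.mem_filter.1 (h (e.symm i).2)).2
      · exact Or.inr fun i => (Finset.mem_filter.1 (h (e.symm i).2)).2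
    · have himg : Finset.image (fun i => ((e.symm i : V))) Finset.univ = U := by
        ext z
        simp only [Finset.mem_image, Finset.mem_univ, true_and]
        constructor
        · rintro ⟨i, rfl⟩
          exact (e.symm i).2
        · intro hz
          exact ⟨e ⟨z, hz⟩, by simp⟩
      rwa [himg]
  have buildF : ∀ (h : V) (U₂ : Finset V), h ∉ U₂ → ¬ WeaklyConnectedOn A (Finset.univ \ U₂) →
      ∃ F₂ : Finset V, F₂.Nonempty ∧ (∀ f ∈ F₂, f ∉ U₂) ∧
        (∀ a ∈ F₂, ∀ b : V, b ∉ U₂ → (A a b ∨ A b a) → b ∈ F₂) ∧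
        (∀ v ∈ F₂, ¬ Relation.ReflTransGen
          (fun a b => a ∈ Finset.univ \ U₂ ∧ b ∈ Finset.univ \ U₂ ∧ (A a b ∨ A b a)) v h) ∧
        (∀ v : V, v ∉ U₂ → v ∉ F₂ → Relation.ReflTransGen
          (fun a b => a ∈ Finset.univ \ U₂ ∧ b ∈ Finset.univ \ U₂ ∧ (A a b ∨ A b a)) v h) := by
    intro h U₂ hhU₂ hnWC
    unfold WeaklyConnectedOn at hnWC
    push_neg at hnWC
    obtain ⟨x, hx, y, hy, hxy⟩ := hnWC
    have hsymm : Symmetric (fun a b => a ∈ Finset.univ \ U₂ ∧ b ∈ Finset.univ \ U₂ ∧ (A a b ∨ A b a)) :=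
      fun a b hab => ⟨hab.2.1, hab.1, hab.2.2.symm⟩
    refine ⟨(Finset.univ \ U₂).filter (fun v => ¬ Relation.ReflTransGen
      (fun a b => a ∈ Finset.univ \ U₂ ∧ b ∈ Finset.univ \ U₂ ∧ (A a b ∨ A b a)) v h), ?_, ?_, ?_, ?_, ?_⟩
    · by_cases hxr : Relation.ReflTransGen
        (fun a b => a ∈ Finset.univ \ U₂ ∧ b ∈ Finset.univ \ U₂ ∧ (A a b ∨ A b a)) x h
      · refine ⟨y, Finset.mem_filter.2 ⟨hy, fun hyr => ?_⟩⟩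
        exact hxy (hxr.trans (((@Relation.ReflTransGen.symmetric _ _ ⟨fun a b h => hsymm h⟩).symm _ _) hyr))
      · exact ⟨x, Finset.mem_filter.2 ⟨hx, hxr⟩⟩
    · intro f hf
      exact (Finset.mem_sdiff.1 (Finset.mem_filter.1 hf).1).2
    · intro a ha b hbU₂ hadj
      obtain ⟨haS, hanr⟩ := Finset.mem_filter.1 ha
      refine Finset.mem_filter.2 ⟨Finset.mem_sdiff.2 ⟨Finset.mem_univ _, hbU₂⟩, fun hbr => ?_⟩
      exact hanr (Relation.ReflTransGen.head ⟨haS, Finset.mem_sdiff.2 ⟨Finset.mem_univ _, hbU₂⟩, hadj⟩ hbr)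
    · intro v hv
      exact (Finset.mem_filter.1 hv).2
    · intro v hvU₂ hvF
      by_contra hnr
      exact hvF (Finset.mem_filter.2 ⟨Finset.mem_sdiff.2 ⟨Finset.mem_univ _, hvU₂⟩, hnr⟩)
  have step : ∀ (F U : Finset V) (w : V), F.Nonempty → (∀ f ∈ F, f ∉ U) →
      (∀ a ∈ F, ∀ b : V, b ∉ U → (A a b ∨ A b a) → b ∈ F) → U.card = m + 1 →
      (U ⊆ Finset.univ.filter (fun z => A w z) ∨ U ⊆ Finset.univ.filter (fun z => A z w)) →
      ∃ (F₂ U₂ : Finset V) (w₂ : V), F₂.Nonempty ∧ (∀ f ∈ F₂, f ∉ U₂) ∧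
        (∀ a ∈ F₂, ∀ b : V, b ∉ U₂ → (A a b ∨ A b a) → b ∈ F₂) ∧ U₂.card = m + 1 ∧
        (U₂ ⊆ Finset.univ.filter (fun z => A w₂ z) ∨ U₂ ⊆ Finset.univ.filter (fun z => A z w₂)) ∧
        F₂.card + (m + 1) ≤ F.card := by
    intro F U w hFne hFU hFcl hUcard hUside
    obtain ⟨U₂, w₂, hU₂F, hwU₂, hU₂card, hU₂side⟩ :
        ∃ (U₂ : Finset V) (w₂ : V), U₂ ⊆ F ∧ w ∉ U₂ ∧ U₂.card = m + 1 ∧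
          (U₂ ⊆ Finset.univ.filter (fun z => A w₂ z) ∨ U₂ ⊆ Finset.univ.filter (fun z => A z w₂)) := by
      by_cases hwF : w ∈ F
      · rcases hUside with hσ | hσ
        · have hsub : Finset.univ.filter (fun z => A z w) ⊆ F := by
            intro z hz
            have hzw := (Finset.mem_filter.1 hz).2
            have hzU : z ∉ U := fun hzU => hor z w hzw (Finset.mem_filter.1 (hσ hzU)).2
            exact hFcl w hwF z hzU (Or.inr hzw)
          obtain ⟨U₂, hU₂sub, hU₂c⟩ := Finset.exists_subset_card_eq
            (show m + 1 ≤ (Finset.univ.filter (fun z => A z w)).card by rw [hNM w]; exact hq2)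
          exact ⟨U₂, w, hU₂sub.trans hsub,
            fun hwmem => hirr w (Finset.mem_filter.1 (hU₂sub hwmem)).2, hU₂c, Or.inr hU₂sub⟩
        · have hsub : Finset.univ.filter (fun z => A w z) ⊆ F := by
            intro z hz
            have hwz := (Finset.mem_filter.1 hz).2
            have hzU : z ∉ U := fun hzU => hor w z hwz (Finset.mem_filter.1 (hσ hzU)).2
            exact hFcl w hwF z hzU (Or.inl hwz)
          obtain ⟨U₂, hU₂sub, hU₂c⟩ := Finset.exists_subset_card_eq
            (show m + 1 ≤ (Finset.univ.filter (fun z => A w z)).card by rw [hNP w]; exact hq2)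
          exact ⟨U₂, w, hU₂sub.trans hsub,
            fun hwmem => hirr w (Finset.mem_filter.1 (hU₂sub hwmem)).2, hU₂c, Or.inl hU₂sub⟩
      · by_cases hst : ∀ f ∈ F, (F.filter (fun z => A f z)).card ≤ m ∧ (F.filter (fun z => A z f)).card ≤ m
        · exfalso
          obtain ⟨f₀, hf₀⟩ := hFne
          have hdecO : ∀ f ∈ F,
              (F.filter (fun z => A f z)).card + (U.filter (fun z => A f z)).card = (k - 1) * m := by
            intro f hf
            have hun : F.filter (fun z => A f z) ∪ U.filter (fun z => A f z)
                = Finset.univ.filter (fun z => A f z) := by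
              ext b
              simp only [Finset.mem_union, Finset.mem_filter, Finset.mem_univ, true_and]
              constructor
              · rintro (⟨_, hb⟩ | ⟨_, hb⟩) <;> exact hb
              · intro hb
                by_cases hbU : b ∈ U
                · exact Or.inr ⟨hbU, hb⟩
                · exact Or.inl ⟨hFcl f hf b hbU (Or.inl hb), hb⟩
            have hdisj : Disjoint (F.filter (fun z => A f z)) (U.filter (fun z => A f z)) :=
              Finset.disjoint_left.2 fun hb h1 h2 =>
                hFU _ (Finset.mem_filter.1 h1).1 (Finset.mem_filter.1 h2).1
            rw [← Finset.card_union_of_disjoint hdisj, hun]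
            exact hNP f
          have hdecI : ∀ f ∈ F,
              (F.filter (fun z => A z f)).card + (U.filter (fun z => A z f)).card = (k - 1) * m := by
            intro f hf
            have hun : F.filter (fun z => A z f) ∪ U.filter (fun z => A z f)
                = Finset.univ.filter (fun z => A z f) := by
              ext b
              simp only [Finset.mem_union, Finset.mem_filter, Finset.mem_univ, true_and]
              constructor
              · rintro (⟨_, hb⟩ | ⟨_, hb⟩) <;> exact hb
              · intro hb
                by_cases hbU : b ∈ U
                · exact Or.inr ⟨hbU, hb⟩
                · exact Or.inl ⟨hFcl f hf b hbU (Or.inr hb), hb⟩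
            have hdisj : Disjoint (F.filter (fun z => A z f)) (U.filter (fun z => A z f)) :=
              Finset.disjoint_left.2 fun hb h1 h2 =>
                hFU _ (Finset.mem_filter.1 h1).1 (Finset.mem_filter.1 h2).1
            rw [← Finset.card_union_of_disjoint hdisj, hun]
            exact hNM f
          have hUsum : ∀ f ∈ F,
              (U.filter (fun z => A f z)).card + (U.filter (fun z => A z f)).card ≤ m + 1 := by
            intro f hf
            have hdisj : Disjoint (U.filter (fun z => A f z)) (U.filter (fun z => A z f)) :=
              Finset.disjoint_left.2 fun {b} h1 h2 =>
                hor f b (Finset.mem_filter.1 h1).2 (Finset.mem_filter.1 h2).2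
            have hsub : U.filter (fun z => A f z) ∪ U.filter (fun z => A z f) ⊆ U :=
              Finset.union_subset (Finset.filter_subset _ _) (Finset.filter_subset _ _)
            have hcc := Finset.card_le_card hsub
            rw [Finset.card_union_of_disjoint hdisj, hUcard] at hcc
            exact hcc
          have hkey : 2 * ((k - 1) * m) ≤ 3 * m + 1 := by
            have h1 := hdecO f₀ hf₀
            have h2 := hdecI f₀ hf₀
            have h3 := hUsum f₀ hf₀
            have h4 := (hst f₀ hf₀).1
            have h5 := (hst f₀ hf₀).2
            omega
          have hm1 : m = 1 := by omega
          have hq1 : (k - 1) * m = 2 := by omega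
          have htO : ∀ f ∈ F, (F.filter (fun z => A f z)).card = 1 ∧ (F.filter (fun z => A z f)).card = 1 ∧
              (U.filter (fun z => A f z)).card = 1 ∧ (U.filter (fun z => A z f)).card = 1 := by
            intro f hf
            have h1 := hdecO f hf
            have h2 := hdecI f hf
            have h3 := hUsum f hf
            have h4 := (hst f hf).1
            have h5 := (hst f hf).2
            omega
          have hF3 : 3 ≤ F.card := by
            obtain ⟨h1, h2, -, -⟩ := htO f₀ hf₀
            obtain ⟨g, hg⟩ := Finset.card_pos.1 (show 0 < (F.filter (fun z => A f₀ z)).card by omega)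
            obtain ⟨e, he⟩ := Finset.card_pos.1 (show 0 < (F.filter (fun z => A z f₀)).card by omega)
            obtain ⟨hgF, hfg⟩ := Finset.mem_filter.1 hg
            obtain ⟨heF, hef⟩ := Finset.mem_filter.1 he
            have hge : g ≠ e := fun hEq => hor f₀ g hfg (hEq ▸ hef)
            have hgf : g ≠ f₀ := fun hEq => hirr f₀ (hEq ▸ hfg)
            have hef' : e ≠ f₀ := fun hEq => hirr f₀ (hEq ▸ hef)
            have hsub : ({f₀, g, e} : Finset V) ⊆ F := by
              intro z hz
              simp only [Finset.mem_insert, Finset.mem_singleton] at hz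
              rcases hz with rfl | rfl | rfl
              · exact hf₀
              · exact hgF
              · exact heF
            have hnm1 : g ∉ ({e} : Finset V) := by simp [hge]
            have hnm2 : f₀ ∉ ({g, e} : Finset V) := by
              simp only [Finset.mem_insert, Finset.mem_singleton]
              push_neg
              exact ⟨Ne.symm hgf, Ne.symm hef'⟩
            have hc3 : ({f₀, g, e} : Finset V).card = 3 := by
              rw [Finset.card_insert_of_notMem hnm2, Finset.card_insert_of_notMem hnm1,
                Finset.card_singleton]
            calc 3 = ({f₀, g, e} : Finset V).card := hc3.symm
              _ ≤ F.card := Finset.card_le_card hsub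
          rcases hUside with hσ | hσ
          · have hdc : ∑ f ∈ F, (U.filter (fun z => A f z)).card
                = ∑ u ∈ U, (F.filter (fun z => A z u)).card := by
              simp_rw [Finset.card_filter]
              exact Finset.sum_comm
            have hL : ∑ f ∈ F, (U.filter (fun z => A f z)).card = F.card := by
              rw [Finset.sum_congr rfl (fun f hf => (htO f hf).2.2.1)]
              simp
            have hR : ∑ u ∈ U, (F.filter (fun z => A z u)).card ≤ ∑ u ∈ U, 1 := by
              apply Finset.sum_le_sum
              intro u hu
              have hwm : w ∈ Finset.univ.filter (fun z => A z u) :=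
                Finset.mem_filter.2 ⟨Finset.mem_univ _, (Finset.mem_filter.1 (hσ hu)).2⟩
              have hsub2 : F.filter (fun z => A z u) ⊆ (Finset.univ.filter (fun z => A z u)).erase w := by
                intro z hz
                obtain ⟨hzF, hzu⟩ := Finset.mem_filter.1 hz
                exact Finset.mem_erase.2 ⟨fun hEq => hwF (hEq ▸ hzF),
                  Finset.mem_filter.2 ⟨Finset.mem_univ _, hzu⟩⟩
              have h6 := Finset.card_le_card hsub2
              rw [Finset.card_erase_of_mem hwm, hNM u, hq1] at h6
              omega
            have hfin : F.card ≤ m + 1 := by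
              calc F.card = ∑ u ∈ U, (F.filter (fun z => A z u)).card := by rw [← hdc, hL]
                _ ≤ ∑ u ∈ U, 1 := hR
                _ = U.card := by simp
                _ = m + 1 := hUcard
            omega
          · have hdc : ∑ f ∈ F, (U.filter (fun z => A z f)).card
                = ∑ u ∈ U, (F.filter (fun z => A u z)).card := by
              simp_rw [Finset.card_filter]
              exact Finset.sum_comm
            have hL : ∑ f ∈ F, (U.filter (fun z => A z f)).card = F.card := by
              rw [Finset.sum_congr rfl (fun f hf => (htO f hf).2.2.2)]
              simp
            have hR : ∑ u ∈ U, (F.filter (fun z => A u z)).card ≤ ∑ u ∈ U, 1 := by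
              apply Finset.sum_le_sum
              intro u hu
              have hwm : w ∈ Finset.univ.filter (fun z => A u z) :=
                Finset.mem_filter.2 ⟨Finset.mem_univ _, (Finset.mem_filter.1 (hσ hu)).2⟩
              have hsub2 : F.filter (fun z => A u z) ⊆ (Finset.univ.filter (fun z => A u z)).erase w := by
                intro z hz
                obtain ⟨hzF, hzu⟩ := Finset.mem_filter.1 hz
                exact Finset.mem_erase.2 ⟨fun hEq => hwF (hEq ▸ hzF),
                  Finset.mem_filter.2 ⟨Finset.mem_univ _, hzu⟩⟩
              have h6 := Finset.card_le_card hsub2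
              rw [Finset.card_erase_of_mem hwm, hNP u, hq1] at h6
              omega
            have hfin : F.card ≤ m + 1 := by
              calc F.card = ∑ u ∈ U, (F.filter (fun z => A u z)).card := by rw [← hdc, hL]
                _ ≤ ∑ u ∈ U, 1 := hR
                _ = U.card := by simp
                _ = m + 1 := hUcard
            omega
        · push_neg at hst
          obtain ⟨f, hfF, hf⟩ := hst
          by_cases hout : (F.filter (fun z => A f z)).card ≤ m
          · have hbig : m + 1 ≤ (F.filter (fun z => A z f)).card := hf hout
            obtain ⟨U₂, hU₂sub, hU₂c⟩ := Finset.exists_subset_card_eq hbig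
            refine ⟨U₂, f, hU₂sub.trans (Finset.filter_subset _ _),
              fun hwmem => hwF (Finset.filter_subset _ _ (hU₂sub hwmem)), hU₂c, Or.inr ?_⟩
            intro z hz
            exact Finset.mem_filter.2 ⟨Finset.mem_univ _, (Finset.mem_filter.1 (hU₂sub hz)).2⟩
          · have hbig : m + 1 ≤ (F.filter (fun z => A f z)).card := by omega
            obtain ⟨U₂, hU₂sub, hU₂c⟩ := Finset.exists_subset_card_eq hbig
            refine ⟨U₂, f, hU₂sub.trans (Finset.filter_subset _ _),
              fun hwmem => hwF (Finset.filter_subset _ _ (hU₂sub hwmem)), hU₂c, Or.inl ?_⟩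
            intro z hz
            exact Finset.mem_filter.2 ⟨Finset.mem_univ _, (Finset.mem_filter.1 (hU₂sub hz)).2⟩
    have hnWC := hfail w₂ U₂ hU₂card hU₂side
    obtain ⟨F₂, hF₂ne, hF₂U₂, hF₂cl, hF₂nr, hreach⟩ := buildF w U₂ hwU₂ hnWC
    have hclaim : ∀ z : V, z ∉ F → z ∉ U₂ → Relation.ReflTransGen
        (fun a b => a ∈ Finset.univ \ U₂ ∧ b ∈ Finset.univ \ U₂ ∧ (A a b ∨ A b a)) z w := by
      have key : ∀ z₀ : V, Relation.ReflTransGen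
          (fun a b => a ∈ (Finset.univ : Finset V) ∧ b ∈ (Finset.univ : Finset V) ∧ (A a b ∨ A b a)) z₀ w →
          z₀ ∉ F → z₀ ∉ U₂ → Relation.ReflTransGen
          (fun a b => a ∈ Finset.univ \ U₂ ∧ b ∈ Finset.univ \ U₂ ∧ (A a b ∨ A b a)) z₀ w := by
        intro z₀ hzw
        induction hzw using Relation.ReflTransGen.head_induction_on with
        | refl =>
          intro _ _
          exact Relation.ReflTransGen.refl
        | @head a c h' hrest ih =>
          intro haF haU₂
          by_cases hcF : c ∈ F
          · by_cases haU : a ∈ U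
            · rcases hUside with hσ | hσ
              · exact Relation.ReflTransGen.single ⟨Finset.mem_sdiff.2 ⟨Finset.mem_univ _, haU₂⟩,
                  Finset.mem_sdiff.2 ⟨Finset.mem_univ _, hwU₂⟩,
                  Or.inr (Finset.mem_filter.1 (hσ haU)).2⟩
              · exact Relation.ReflTransGen.single ⟨Finset.mem_sdiff.2 ⟨Finset.mem_univ _, haU₂⟩,
                  Finset.mem_sdiff.2 ⟨Finset.mem_univ _, hwU₂⟩,
                  Or.inl (Finset.mem_filter.1 (hσ haU)).2⟩
            · exact absurd (hFcl c hcF a haU h'.2.2.symm) haF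
          · have hcU₂ : c ∉ U₂ := fun hc => hcF (hU₂F hc)
            exact Relation.ReflTransGen.head ⟨Finset.mem_sdiff.2 ⟨Finset.mem_univ _, haU₂⟩,
              Finset.mem_sdiff.2 ⟨Finset.mem_univ _, hcU₂⟩, h'.2.2⟩ (ih hcF hcU₂)
      intro z hzF hzU₂
      exact key z (hconn z w) hzF hzU₂
    have hF₂F : F₂ ⊆ F := by
      intro v hv
      by_contra hvF
      exact hF₂nr v hv (hclaim v hvF (hF₂U₂ v hv))
    have hcard2 : F₂.card + (m + 1) ≤ F.card := by
      have hsub : F₂ ⊆ F \ U₂ := fun v hv => Finset.mem_sdiff.2 ⟨hF₂F hv, hF₂U₂ v hv⟩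
      have h1 := Finset.card_le_card hsub
      have h2 := Finset.card_le_card hU₂F
      rw [Finset.card_sdiff_of_subset hU₂F, hU₂card] at h1
      omega
    exact ⟨F₂, U₂, w₂, hF₂ne, hF₂U₂, hF₂cl, hU₂card, hU₂side, hcard2⟩
  have main : ∀ (N : ℕ) (F U : Finset V) (w : V), F.Nonempty → (∀ f ∈ F, f ∉ U) →
      (∀ a ∈ F, ∀ b : V, b ∉ U → (A a b ∨ A b a) → b ∈ F) → U.card = m + 1 →
      (U ⊆ Finset.univ.filter (fun z => A w z) ∨ U ⊆ Finset.univ.filter (fun z => A z w)) →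
      F.card ≤ N → False := by
    intro N
    induction N with
    | zero =>
      intro F U w hne _ _ _ _ hle
      have := Finset.card_pos.2 hne
      omega
    | succ N ih =>
      intro F U w hne hFU hcl hUc hUs hle
      obtain ⟨F₂, U₂, w₂, h1, h2, h3, h4, h5, h6⟩ := step F U w hne hFU hcl hUc hUs
      exact ih F₂ U₂ w₂ h1 h2 h3 h4 h5 (by omega)
  obtain ⟨w₀⟩ := hVne
  obtain ⟨U₀, hU₀sub, hU₀card⟩ := Finset.exists_subset_card_eq
    (show m + 1 ≤ (Finset.univ.filter (fun z => A w₀ z)).card by rw [hNP w₀]; exact hq2)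
  have hw₀U₀ : w₀ ∉ U₀ := fun hmem => hirr w₀ (Finset.mem_filter.1 (hU₀sub hmem)).2
  have hnWC₀ := hfail w₀ U₀ hU₀card (Or.inl hU₀sub)
  obtain ⟨F₀, h1, h2, h3, -, -⟩ := buildF w₀ U₀ hw₀U₀ hnWC₀
  exact main F₀.card F₀ U₀ w₀ h1 h2 h3 hU₀card (Or.inl hU₀sub) le_rfl
end

section
/- Suppose m ≥ 1 and D is a (k,m)-critical oriented graph in which every vertex v satisfies d⁺(v) = d⁻(v) = (k-1)m. Then k ≤ 2. -/
open Finset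

variable {V : Type*}

/- ===================== Auxiliary development for stmt7 ===================== -/

namespace Stmt7Aux
set_option linter.unusedSectionVars false

open Finset Function

variable {V : Type*} [Fintype V] [DecidableEq V]

section Basic

/-- Underlying (symmetrized) adjacency. -/
def adjU (A : V → V → Prop) (x y : V) : Prop := A x y ∨ A y x

/-- `c` is a valid `(k-1)`-coloring of `V \ {t}` (all classes weakly `m`-degenerate). -/
def Valid (A : V → V → Prop) [DecidableRel A] (m : ℕ) {k : ℕ} (t : V)
    (c : V → Fin (k-1)) : Prop :=
  ∀ i, WeaklyDegOn A m ((Finset.univ.erase t).filter (fun v => c v = i))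

/-- number of out-neighbours of `o` of color `j` among `V \ {t}`. -/
def cntO (A : V → V → Prop) [DecidableRel A] {k : ℕ} (c : V → Fin (k-1)) (t : V)
    (j : Fin (k-1)) (o : V) : ℕ :=
  ((Finset.univ.erase t).filter (fun v => c v = j ∧ A o v)).card

/-- number of in-neighbours of `o` of color `j` among `V \ {t}`. -/
def cntI (A : V → V → Prop) [DecidableRel A] {k : ℕ} (c : V → Fin (k-1)) (t : V)
    (j : Fin (k-1)) (o : V) : ℕ :=
  ((Finset.univ.erase t).filter (fun v => c v = j ∧ A v o)).card

/-- Bundle of standing hypotheses. -/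
def Good (A : V → V → Prop) [DecidableRel A] (m k : ℕ) : Prop :=
  1 ≤ m ∧ Oriented A ∧ 3 ≤ k ∧ chiDegOn A m Finset.univ = k ∧
    (∀ v : V, chiDegOn A m (Finset.univ.erase v) < k) ∧
    (∀ v : V, outDegOn A Finset.univ v = (k - 1) * m ∧
      inDegOn A Finset.univ v = (k - 1) * m)

end Basic

variable {A : V → V → Prop} [DecidableRel A] {m k : ℕ}

lemma Good.hm (hg : Good A m k) : 1 ≤ m := hg.1
lemma Good.hor (hg : Good A m k) : Oriented A := hg.2.1
lemma Good.hk (hg : Good A m k) : 3 ≤ k := hg.2.2.1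
lemma Good.hchi (hg : Good A m k) : chiDegOn A m Finset.univ = k := hg.2.2.2.1
lemma Good.hcrit (hg : Good A m k) : ∀ v : V, chiDegOn A m (Finset.univ.erase v) < k :=
  hg.2.2.2.2.1
lemma Good.hdeg (hg : Good A m k) : ∀ v : V, outDegOn A Finset.univ v = (k - 1) * m ∧
    inDegOn A Finset.univ v = (k - 1) * m := hg.2.2.2.2.2

lemma Good.noloop (hg : Good A m k) (v : V) : ¬ A v v := fun h => hg.hor v v h h

lemma weak_mono {S S' : Finset V} (h : S ⊆ S') (hw : WeaklyDegOn A m S') :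
    WeaklyDegOn A m S := fun T hT => hw T (hT.trans h)

lemma weak_empty : WeaklyDegOn A m (∅ : Finset V) := by
  intro T hT hne
  rcases hne with ⟨v, hv⟩
  exact absurd (hT hv) (by simp)

end Stmt7Aux

namespace Stmt7Aux

open Finset Function

set_option linter.unusedSectionVars false

variable {V : Type*} [Fintype V] [DecidableEq V]
variable {A : V → V → Prop} [DecidableRel A] {m k : ℕ}

/-- sum helper -/
lemma eq_of_sum_eq {s : ℕ} (f : Fin s → ℕ) (h : ∀ i, m ≤ f i)
    (hs : ∑ i, f i = s * m) : ∀ i, f i = m := by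
  by_contra hne
  push_neg at hne
  obtain ⟨i₀, hi₀⟩ := hne
  have hlt : ∑ _i : Fin s, m < ∑ i, f i :=
    Finset.sum_lt_sum (fun i _ => h i) ⟨i₀, Finset.mem_univ _,
      lt_of_le_of_ne (h i₀) (Ne.symm hi₀)⟩
  rw [hs] at hlt
  simp [Finset.sum_const, Finset.card_univ, mul_comm] at hlt

/-- a valid `(k-1)`-coloring of `V \ {o}` always exists. -/
lemma Good.existsColoring (hg : Good A m k) (o : V) :
    ∃ c : V → Fin (k - 1), Valid A m o c := by
  classical
  set S := (Finset.univ : Finset V).erase o with hS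
  have hne : {n | ∃ c : V → Fin n, ∀ i,
      WeaklyDegOn A m (S.filter (fun v => c v = i))}.Nonempty := by
    refine ⟨Fintype.card V, Fintype.equivFin V, ?_⟩
    intro i T hT hTne
    obtain ⟨v, hv⟩ := hTne
    refine ⟨v, hv, Or.inl ?_⟩
    have : T.filter (fun w => A v w) = ∅ := by
      apply Finset.eq_empty_of_forall_notMem
      intro w hw
      simp only [Finset.mem_filter] at hw
      have h1 := hT hw.1
      have h2 := hT hv
      simp only [Finset.mem_filter] at h1 h2
      have : w = v := (Fintype.equivFin V).injective (h1.2.trans h2.2.symm)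
      subst this
      exact hg.noloop w hw.2
    rw [outDegOn, this]
    simp only [Finset.card_empty]; exact hg.hm
  have hmem := Nat.sInf_mem hne
  obtain ⟨c₀, hc₀⟩ := hmem
  have hlt : chiDegOn A m S < k := hg.hcrit o
  have hle : chiDegOn A m S ≤ k - 1 := by omega
  refine ⟨fun v => Fin.castLE hle (c₀ v), ?_⟩
  intro i
  by_cases hi : (i : ℕ) < chiDegOn A m S
  · have hset : S.filter (fun v => Fin.castLE hle (c₀ v) = i)
        = S.filter (fun v => c₀ v = ⟨(i : ℕ), hi⟩) := by
      apply Finset.filter_congr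
      intro v _
      constructor
      · intro h; apply Fin.ext; have h' := congrArg Fin.val h; exact h'
      · intro h; apply Fin.ext; have h' := congrArg Fin.val h; exact h'
    rw [hset]
    exact hc₀ _
  · have hset : S.filter (fun v => Fin.castLE hle (c₀ v) = i) = ∅ := by
      apply Finset.filter_false_of_mem
      intro v _
      intro h
      have := congrArg Fin.val h
      change (c₀ v).val = i.val at this
      have hv := (c₀ v).isLt
      change (c₀ v).val < chiDegOn A m S at hv
      omega
    rw [hset]
    exact weak_empty

/-- If some class sees `< m` out-(or in-)neighbours of the token, we can finish
coloring all of `V` and contradict `χ = k`. -/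
lemma Good.extend (hg : Good A m k) {t : V} {c : V → Fin (k - 1)} {j : Fin (k - 1)}
    (hv : Valid A m t c)
    (hlow : cntO A c t j t < m ∨ cntI A c t j t < m) : False := by
  classical
  set cP : V → Fin (k - 1) := Function.update c t j with hcP
  have hall : ∀ i, WeaklyDegOn A m (Finset.univ.filter (fun v => cP v = i)) := by
    intro i
    by_cases hij : i = j
    · subst hij
      have hset : Finset.univ.filter (fun v => cP v = i)
          = insert t ((Finset.univ.erase t).filter (fun v => c v = i)) := by
        ext v
        by_cases hvt : v = t
        · subst hvt; simp [hcP, Function.update_apply]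
        · simp [hcP, Function.update_apply, hvt]
      rw [hset]
      intro T hT hTne
      by_cases htT : t ∈ T
      · refine ⟨t, htT, ?_⟩
        rcases hlow with h | h
        · left
          refine lt_of_le_of_lt (Finset.card_le_card ?_) h
          intro w hw
          simp only [Finset.mem_filter] at hw
          have hwT := hT hw.1
          have hwt : w ≠ t := by
            rintro rfl; exact hg.noloop w hw.2
          simp only [Finset.mem_insert, hwt, false_or, Finset.mem_filter] at hwT
          simp only [cntO] at *
          simp only [Finset.mem_filter]
          exact ⟨hwT.1, hwT.2, hw.2⟩
        · right
          refine lt_of_le_of_lt (Finset.card_le_card ?_) h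
          intro w hw
          simp only [Finset.mem_filter] at hw
          have hwT := hT hw.1
          have hwt : w ≠ t := by
            rintro rfl; exact hg.noloop w hw.2
          simp only [Finset.mem_insert, hwt, false_or, Finset.mem_filter] at hwT
          simp only [cntI] at *
          simp only [Finset.mem_filter]
          exact ⟨hwT.1, hwT.2, hw.2⟩
      · have hsub : T ⊆ (Finset.univ.erase t).filter (fun v => c v = i) := by
          intro w hw
          have := hT hw
          simp only [Finset.mem_insert] at this
          rcases this with rfl | h
          · exact absurd hw htT
          · exact h
        exact hv i T hsub hTne
    · have hset : Finset.univ.filter (fun v => cP v = i)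
          = (Finset.univ.erase t).filter (fun v => c v = i) := by
        ext v
        by_cases hvt : v = t
        · subst hvt; simp [hcP, Function.update_apply, Ne.symm hij, hij]
        · simp [hcP, Function.update_apply, hvt]
      rw [hset]
      exact hv i
  have hle : chiDegOn A m (Finset.univ : Finset V) ≤ k - 1 :=
    Nat.sInf_le ⟨cP, hall⟩
  rw [hg.hchi] at hle
  have := hg.hk
  omega

/-- tightness: with token at `t`, every class sees exactly `m` out- and `m`
in-neighbours of `t`. -/
lemma Good.tight (hg : Good A m k) {t : V} {c : V → Fin (k - 1)}
    (hv : Valid A m t c) (j : Fin (k - 1)) :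
    cntO A c t j t = m ∧ cntI A c t j t = m := by
  classical
  have hlbO : ∀ i, m ≤ cntO A c t i t := by
    intro i; by_contra h; push_neg at h; exact hg.extend hv (Or.inl h)
  have hlbI : ∀ i, m ≤ cntI A c t i t := by
    intro i; by_contra h; push_neg at h; exact hg.extend hv (Or.inr h)
  have hOeq : ∀ i, cntO A c t i t = ((Finset.univ.filter (fun v => A t v)).filter
      (fun v => c v = i)).card := by
    intro i
    unfold cntO
    refine congrArg Finset.card ?_
    ext v
    by_cases hvt : v = t
    · subst hvt
      simp [hg.noloop v]
    · simp only [Finset.mem_filter, Finset.mem_erase, Finset.mem_univ, true_and,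
        hvt, ne_eq, not_false_iff]
      tauto
  have hIeq : ∀ i, cntI A c t i t = ((Finset.univ.filter (fun v => A v t)).filter
      (fun v => c v = i)).card := by
    intro i
    unfold cntI
    refine congrArg Finset.card ?_
    ext v
    by_cases hvt : v = t
    · subst hvt
      simp [hg.noloop v]
    · simp only [Finset.mem_filter, Finset.mem_erase, Finset.mem_univ, true_and,
        hvt, ne_eq, not_false_iff]
      tauto
  have hsumO : ∑ i : Fin (k - 1), cntO A c t i t = (k - 1) * m := by
    calc ∑ i : Fin (k - 1), cntO A c t i t
        = ∑ i : Fin (k - 1), ((Finset.univ.filter (fun v => A t v)).filter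
            (fun v => c v = i)).card := Finset.sum_congr rfl (fun i _ => hOeq i)
      _ = (Finset.univ.filter (fun v => A t v)).card :=
          (Finset.card_eq_sum_card_fiberwise (fun v _ => Finset.mem_univ (c v))).symm
      _ = (k - 1) * m := (hg.hdeg t).1
  have hsumI : ∑ i : Fin (k - 1), cntI A c t i t = (k - 1) * m := by
    calc ∑ i : Fin (k - 1), cntI A c t i t
        = ∑ i : Fin (k - 1), ((Finset.univ.filter (fun v => A v t)).filter
            (fun v => c v = i)).card := Finset.sum_congr rfl (fun i _ => hIeq i)
      _ = (Finset.univ.filter (fun v => A v t)).card :=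
          (Finset.card_eq_sum_card_fiberwise (fun v _ => Finset.mem_univ (c v))).symm
      _ = (k - 1) * m := (hg.hdeg t).2
  exact ⟨eq_of_sum_eq _ hlbO hsumO j, eq_of_sum_eq _ hlbI hsumI j⟩

end Stmt7Aux

namespace Stmt7Aux

open Finset Function

set_option linter.unusedSectionVars false

variable {V : Type*} [Fintype V] [DecidableEq V]
variable {A : V → V → Prop} [DecidableRel A] {m k : ℕ}

/-- Sliding the token (= uncolored vertex) from `t` to a neighbour `s₀`,
giving `t` the old color of `s₀`, keeps the coloring valid. -/
lemma Good.swap (hg : Good A m k) {t s₀ : V} {c : V → Fin (k - 1)}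
    (hv : Valid A m t c) (hadj : adjU A t s₀) (hne : s₀ ≠ t) :
    Valid A m s₀ (Function.update c t (c s₀)) := by
  classical
  intro i
  by_cases hi : i = c s₀
  · subst hi
    have hset : (Finset.univ.erase s₀).filter (fun v => Function.update c t (c s₀) v = c s₀)
        = insert t (((Finset.univ.erase t).filter (fun v => c v = c s₀)).erase s₀) := by
      ext v
      by_cases hvt : v = t
      · subst hvt
        simp [Function.update_apply, Ne.symm hne]
      · simp only [Finset.mem_filter, Finset.mem_erase, Finset.mem_univ, true_and,
          Finset.mem_insert, hvt, false_or, Function.update_apply, if_neg hvt]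
        tauto
    rw [hset]
    intro T hT hTne
    by_cases htT : t ∈ T
    · refine ⟨t, htT, ?_⟩
      rcases hadj with hts | hst
      · -- A t s₀ : use out-degree witness
        left
        have hsub : T.filter (fun w => A t w)
            ⊆ ((Finset.univ.erase t).filter (fun v => c v = c s₀ ∧ A t v)).erase s₀ := by
          intro w hw
          simp only [Finset.mem_filter] at hw
          have hwT := hT hw.1
          have hwt : w ≠ t := by rintro rfl; exact hg.noloop w hw.2
          simp only [Finset.mem_insert, hwt, false_or, Finset.mem_erase,
            Finset.mem_filter] at hwT
          simp only [Finset.mem_erase, Finset.mem_filter]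
          exact ⟨hwT.1, hwT.2.1, hwT.2.2, hw.2⟩
        have hcard : (((Finset.univ.erase t).filter (fun v => c v = c s₀ ∧ A t v)).erase s₀).card
            = m - 1 := by
          have hmem : s₀ ∈ (Finset.univ.erase t).filter (fun v => c v = c s₀ ∧ A t v) := by
            simp [hne, hts]
          rw [Finset.card_erase_of_mem hmem]
          have := (hg.tight hv (c s₀)).1
          unfold cntO at this
          omega
        have hle := Finset.card_le_card hsub
        rw [hcard] at hle
        have hm := hg.hm
        calc outDegOn A T t = (T.filter (fun w => A t w)).card := rfl
          _ ≤ m - 1 := hle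
          _ < m := by omega
      · -- A s₀ t : use in-degree witness
        right
        have hsub : T.filter (fun w => A w t)
            ⊆ ((Finset.univ.erase t).filter (fun v => c v = c s₀ ∧ A v t)).erase s₀ := by
          intro w hw
          simp only [Finset.mem_filter] at hw
          have hwT := hT hw.1
          have hwt : w ≠ t := by rintro rfl; exact hg.noloop w hw.2
          simp only [Finset.mem_insert, hwt, false_or, Finset.mem_erase,
            Finset.mem_filter] at hwT
          simp only [Finset.mem_erase, Finset.mem_filter]
          exact ⟨hwT.1, hwT.2.1, hwT.2.2, hw.2⟩
        have hcard : (((Finset.univ.erase t).filter (fun v => c v = c s₀ ∧ A v t)).erase s₀).card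
            = m - 1 := by
          have hmem : s₀ ∈ (Finset.univ.erase t).filter (fun v => c v = c s₀ ∧ A v t) := by
            simp [hne, hst]
          rw [Finset.card_erase_of_mem hmem]
          have := (hg.tight hv (c s₀)).2
          unfold cntI at this
          omega
        have hle := Finset.card_le_card hsub
        rw [hcard] at hle
        have hm := hg.hm
        calc inDegOn A T t = (T.filter (fun w => A w t)).card := rfl
          _ ≤ m - 1 := hle
          _ < m := by omega
    · have hsub : T ⊆ (Finset.univ.erase t).filter (fun v => c v = c s₀) := by
        intro w hw
        have := hT hw
        simp only [Finset.mem_insert] at this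
        rcases this with rfl | h
        · exact absurd hw htT
        · exact Finset.mem_of_mem_erase h
      exact hv (c s₀) T hsub hTne
  · have hset : (Finset.univ.erase s₀).filter (fun v => Function.update c t (c s₀) v = i)
        = ((Finset.univ.erase t).filter (fun v => c v = i)).erase s₀ := by
      ext v
      by_cases hvt : v = t
      · subst hvt
        simp only [Finset.mem_filter, Finset.mem_erase, Finset.mem_univ, true_and,
          Function.update_apply, if_pos rfl]
        constructor
        · rintro ⟨-, h2⟩; exact absurd h2.symm hi
        · rintro ⟨-, h2, -⟩; exact absurd rfl h2.1
      · simp only [Finset.mem_filter, Finset.mem_erase, Finset.mem_univ, true_and,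
          Function.update_apply, if_neg hvt]
        tauto
    rw [hset]
    exact weak_mono (Finset.erase_subset _ _) (hv i)

/-- indicator -/
noncomputable def ind (P : Prop) : ℤ := by classical exact if P then 1 else 0

lemma ind_of (P : Prop) (h : P) : ind P = 1 := by simp [ind, h]
lemma ind_not (P : Prop) (h : ¬P) : ind P = 0 := by simp [ind, h]
lemma ind_nonneg (P : Prop) : 0 ≤ ind P := by by_cases h : P <;> simp [ind, h]
lemma ind_le_one (P : Prop) : ind P ≤ 1 := by by_cases h : P <;> simp [ind, h]

/-- Count transition when the token slides from `t` to `p`. -/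
lemma cnt_swap (hg : Good A m k) (o : V) {t p : V} (hpt : p ≠ t)
    (c : V → Fin (k - 1)) (j : Fin (k - 1)) :
    (cntO A (Function.update c t (c p)) p j o : ℤ)
      = (cntO A c t j o : ℤ) - ind (c p = j ∧ A o p) + ind (c p = j ∧ A o t) := by
  classical
  set B := (Finset.univ.erase t).filter (fun v => c v = j ∧ A o v) with hB
  set D := (Finset.univ.erase p).filter
      (fun v => Function.update c t (c p) v = j ∧ A o v) with hD
  by_cases hcp : c p = j
  · by_cases hot : A o t
    · have hset : D = insert t (B.erase p) := by
        ext v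
        by_cases hvt : v = t
        · subst hvt
          simp [hD, Function.update_apply, Ne.symm hpt, hcp, hot]
        · simp only [hD, hB, Finset.mem_filter, Finset.mem_erase, Finset.mem_univ,
            true_and, Finset.mem_insert, hvt, false_or, Function.update_apply, if_neg hvt]
          tauto
      have htB : t ∉ B.erase p := by
        simp [hB]
      have hcard : D.card = (B.erase p).card + 1 := by
        rw [hset, Finset.card_insert_of_notMem htB]
      by_cases hop : A o p
      · have hpB : p ∈ B := by simp [hB, hpt, hcp, hop]
        have : (B.erase p).card = B.card - 1 := Finset.card_erase_of_mem hpB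
        have hBpos : 1 ≤ B.card := Finset.card_pos.mpr ⟨p, hpB⟩
        unfold cntO
        rw [← hD, ← hB, hcard, this, ind_of _ ⟨hcp, hop⟩, ind_of _ ⟨hcp, hot⟩]
        push_cast
        omega
      · have hpB : p ∉ B := by simp [hB, hop]
        have : B.erase p = B := Finset.erase_eq_of_notMem hpB
        unfold cntO
        rw [← hD, ← hB, hcard, this, ind_not (c p = j ∧ A o p) (fun h => hop h.2), ind_of _ ⟨hcp, hot⟩]
        push_cast
        omega
    · have hset : D = B.erase p := by
        ext v
        by_cases hvt : v = t
        · subst hvt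
          simp [hD, Function.update_apply, Ne.symm hpt, hot, hB]
        · simp only [hD, hB, Finset.mem_filter, Finset.mem_erase, Finset.mem_univ,
            true_and, Function.update_apply, if_neg hvt]
          tauto
      by_cases hop : A o p
      · have hpB : p ∈ B := by simp [hB, hpt, hcp, hop]
        have h2 : (B.erase p).card = B.card - 1 := Finset.card_erase_of_mem hpB
        have hBpos : 1 ≤ B.card := Finset.card_pos.mpr ⟨p, hpB⟩
        unfold cntO
        rw [← hD, ← hB, hset, h2, ind_of _ ⟨hcp, hop⟩, ind_not (c p = j ∧ A o t) (fun h => hot h.2)]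
        push_cast
        omega
      · have hpB : p ∉ B := by simp [hB, hop]
        have h2 : B.erase p = B := Finset.erase_eq_of_notMem hpB
        unfold cntO
        rw [← hD, ← hB, hset, h2, ind_not (c p = j ∧ A o p) (fun h => hop h.2), ind_not (c p = j ∧ A o t) (fun h => hot h.2)]
        omega
  · have hset : D = B.erase p := by
      ext v
      by_cases hvt : v = t
      · subst hvt
        simp only [hD, hB, Finset.mem_filter, Finset.mem_erase, Finset.mem_univ, true_and,
          Function.update_apply, if_pos rfl]
        constructor
        · rintro ⟨-, h2, -⟩; exact absurd h2 hcp
        · rintro ⟨-, h2, -⟩; exact absurd rfl h2.1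
      · simp only [hD, hB, Finset.mem_filter, Finset.mem_erase, Finset.mem_univ,
          true_and, Function.update_apply, if_neg hvt]
        tauto
    have hpB : p ∉ B := by simp [hB, hcp]
    have h2 : B.erase p = B := Finset.erase_eq_of_notMem hpB
    unfold cntO
    rw [← hD, ← hB, hset, h2, ind_not (c p = j ∧ A o p) (fun h => hcp h.1), ind_not (c p = j ∧ A o t) (fun h => hcp h.1)]
    omega

end Stmt7Aux

namespace Stmt7Aux

open Finset Function

set_option linter.unusedSectionVars false

variable {V : Type*} [Fintype V] [DecidableEq V]
variable {A : V → V → Prop} [DecidableRel A] {m k : ℕ}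

lemma ind_and (P Q : Prop) : ind (P ∧ Q) = ind P * ind Q := by
  by_cases hP : P <;> by_cases hQ : Q <;> simp [ind, hP, hQ]

/-- last vertex of the walk `t :: L`. -/
def lastV (t : V) (L : List V) : V := L.getLastD t

@[simp] lemma lastV_nil (t : V) : lastV t ([] : List V) = t := rfl

@[simp] lemma lastV_cons (t p : V) (L : List V) : lastV t (p :: L) = lastV p L := by
  cases L with
  | nil => rfl
  | cons q L => simp [lastV, List.getLastD, List.getLast?_cons_cons]

lemma lastV_mem (t : V) (L : List V) : lastV t L ∈ t :: L := by
  induction L generalizing t with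
  | nil => simp
  | cons p L ih =>
    rw [lastV_cons]
    have := ih p
    simp only [List.mem_cons] at this ⊢
    tauto

/-- The conserved quantity along the token walk. -/
noncomputable def EXPR (A : V → V → Prop) [DecidableRel A] {k : ℕ} (o : V)
    (j : Fin (k - 1)) (t : V) (c : V → Fin (k - 1)) (L : List V) : ℤ :=
  (cntO A c t j o : ℤ) +
  (match L with
   | [] => ind (A o t) * ind (c o = j)
   | p :: L' => ind (A o t) * ind (c p = j) +
       ind (A o (lastV p L')) * (ind (c o = j) - ind (c (lastV p L') = j)))

/-- Walk induction: sliding the token along the remaining path and finally back to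
`o` produces a coloring of `V \ {o}` where class `j` sees fewer than `m`
out-neighbours of `o`; contradiction. -/
lemma Good.walkInd (hg : Good A m k) (o : V) (j : Fin (k - 1)) :
    ∀ (L : List V) (t : V) (c : V → Fin (k - 1)), Valid A m t c →
      List.Chain (adjU A) t L → (t :: L).Nodup → o ∉ (t :: L) →
      (∀ v ∈ L.dropLast, ¬ A o v) →
      adjU A (lastV t L) o →
      EXPR A o j t c L ≤ (m : ℤ) - 1 → False := by
  intro L
  induction L with
  | nil =>
    intro t c hv _hch hnd hno _hint hadj hE
    have hot : o ≠ t := by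
      intro h; exact hno (by simp [h])
    rw [lastV_nil] at hadj
    have hadj' : adjU A t o := by
      rcases hadj with h | h
      · exact Or.inl h
      · exact Or.inr h
    have hval2 : Valid A m o (Function.update c t (c o)) := hg.swap hv hadj' hot
    have htight := (hg.tight hval2 j).1
    have hswap := cnt_swap hg o hot c j
    rw [htight] at hswap
    have hAoo : ¬ A o o := hg.noloop o
    rw [ind_not (c o = j ∧ A o o) (fun h => hAoo h.2), ind_and] at hswap
    simp only [EXPR] at hE
    have h1 : ind (c o = j) * ind (A o t) = ind (A o t) * ind (c o = j) := by ring
    linarith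
  | cons p L' ih =>
    intro t c hv hch hnd hno hint hadj hE
    have hchc := List.chain_cons.mp hch
    have hpt : p ≠ t := by
      have := (List.nodup_cons.mp hnd).1
      intro h; exact this (by simp [h])
    have hot : o ≠ t := by intro h; exact hno (by simp [h])
    have hop' : o ∉ p :: L' := by
      intro h; exact hno (by simp [h])
    have hval2 : Valid A m p (Function.update c t (c p)) := hg.swap hv hchc.1 hpt
    have hnd' : (p :: L').Nodup := (List.nodup_cons.mp hnd).2
    refine ih p (Function.update c t (c p)) hval2 hchc.2 hnd' hop' ?_ ?_ ?_
    · -- interior condition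
      intro v hvmem
      apply hint
      cases L' with
      | nil => simp at hvmem
      | cons q L'' =>
        simp only [List.dropLast_cons₂, List.mem_cons] at hvmem ⊢
        tauto
    · -- last vertex adjacency
      rw [lastV_cons] at hadj
      exact hadj
    · -- EXPR preserved
      have hswap := cnt_swap hg o hpt c j
      have hco : Function.update c t (c p) o = c o := by
        rw [Function.update_apply, if_neg hot]
      cases L' with
      | nil =>
        -- z = p
        simp only [EXPR, lastV_nil, lastV_cons] at hE ⊢
        rw [hco, hswap, ind_and, ind_and]
        ring_nf at hE ⊢
        linarith
      | cons q L'' =>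
        have hqt : q ≠ t := by
          have := (List.nodup_cons.mp hnd).1
          intro h; exact this (by simp [h])
        have hzt : lastV q L'' ≠ t := by
          have hmem := lastV_mem q L''
          have := (List.nodup_cons.mp hnd).1
          intro h
          rw [h] at hmem
          exact this (by simp [List.mem_cons]; tauto)
        have hAop : ¬ A o p := by
          apply hint
          simp [List.dropLast_cons₂]
        have hcq : Function.update c t (c p) q = c q := by
          rw [Function.update_apply, if_neg hqt]
        have hcz : Function.update c t (c p) (lastV q L'') = c (lastV q L'') := by
          rw [Function.update_apply, if_neg hzt]
        simp only [EXPR, lastV_cons] at hE ⊢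
        rw [hco, hswap, ind_and, ind_and, hcq, hcz, ind_not (A o p) hAop]
        ring_nf at hE ⊢
        linarith

/-- Main walk lemma: a closed token walk from `o` through `w₁ ∈ N⁺(o)` whose
color bookkeeping breaks tightness yields a contradiction. -/
lemma Good.walkWin (hg : Good A m k) {o w₁ : V} {c : V → Fin (k - 1)}
    (hv : Valid A m o c) (hw₁ : A o w₁) (p₂ : V) (L₃ : List V)
    (hch : List.Chain (adjU A) w₁ (p₂ :: L₃))
    (hnd : (o :: w₁ :: p₂ :: L₃).Nodup)
    (hint : ∀ v ∈ (p₂ :: L₃).dropLast, ¬ A o v)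
    (hwin : (A (lastV p₂ L₃) o ∧ c p₂ ≠ c w₁) ∨
      (A o (lastV p₂ L₃) ∧ c p₂ ≠ c (lastV p₂ L₃))) : False := by
  classical
  set z := lastV p₂ L₃ with hz
  have hw₁o : w₁ ≠ o := by
    intro h; rw [h] at hw₁; exact hg.noloop o hw₁
  have hval1 : Valid A m w₁ (Function.update c o (c w₁)) :=
    hg.swap hv (Or.inl hw₁) hw₁o
  have hnow : o ∉ w₁ :: p₂ :: L₃ := (List.nodup_cons.mp hnd).1
  have hnd1 : (w₁ :: p₂ :: L₃).Nodup := (List.nodup_cons.mp hnd).2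
  have hadjz : adjU A z o := by
    rcases hwin with ⟨h, _⟩ | ⟨h, _⟩
    · exact Or.inl h
    · exact Or.inr h
  have hp₂o : p₂ ≠ o := by
    intro h; apply hnow; simp [h]
  have hzo : z ≠ o := by
    have hmem := lastV_mem p₂ L₃
    intro h
    apply hnow
    rw [← h]
    simp only [List.mem_cons] at hmem ⊢
    tauto
  have hcupo : Function.update c o (c w₁) o = c w₁ := by
    rw [Function.update_apply, if_pos rfl]
  have hcupp : Function.update c o (c w₁) p₂ = c p₂ := by
    rw [Function.update_apply, if_neg hp₂o]
  have hcupz : Function.update c o (c w₁) z = c z := by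
    rw [Function.update_apply, if_neg hzo]
  have hAoo : ¬ A o o := hg.noloop o
  rcases hwin with ⟨hzAo, hneq⟩ | ⟨hAoz, hneq⟩
  · -- the walk returns through an in-neighbour of o; take j = c w₁
    set j := c w₁ with hj
    have hswap := cnt_swap hg o hw₁o c j
    rw [(hg.tight hv j).1, ind_and, ind_and, ind_of (A o w₁) hw₁,
      ind_not (A o o) hAoo, ind_of (c w₁ = j) rfl] at hswap
    have hAozfalse : ¬ A o z := hg.hor z o hzAo
    refine hg.walkInd o j (p₂ :: L₃) w₁ (Function.update c o (c w₁)) hval1 hch hnd1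
      hnow hint ?_ ?_
    · rw [lastV_cons]
      exact hadjz
    · simp only [EXPR, lastV_cons, ← hz]
      rw [hcupo, hcupp, hcupz, hswap, ind_of (A o w₁) hw₁,
        ind_not (A o z) hAozfalse, ind_not (c p₂ = j) hneq]
      ring_nf
      linarith
  · -- the walk returns through an out-neighbour of o; take j = c z
    set j := c z with hj
    have hswap := cnt_swap hg o hw₁o c j
    rw [(hg.tight hv j).1, ind_and, ind_and, ind_of (A o w₁) hw₁,
      ind_not (A o o) hAoo] at hswap
    refine hg.walkInd o j (p₂ :: L₃) w₁ (Function.update c o (c w₁)) hval1 hch hnd1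
      hnow hint ?_ ?_
    · rw [lastV_cons]
      exact hadjz
    · simp only [EXPR, lastV_cons, ← hz]
      rw [hcupo, hcupp, hcupz, hswap, ind_of (A o w₁) hw₁,
        ind_of (A o z) hAoz, ind_not (c p₂ = j) hneq, ind_of (c z = j) rfl]
      ring_nf
      linarith

end Stmt7Aux

namespace Stmt7Aux

open Finset Function

set_option linter.unusedSectionVars false

variable {V : Type*} [Fintype V] [DecidableEq V]
variable {A : V → V → Prop} [DecidableRel A] {m k : ℕ}

/-- W1: with token at `o`, any neighbour `v'` of `a ∈ N⁺(o)` lying in `N⁻(o)`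
must have the color of `a`. -/
lemma Good.W1 (hg : Good A m k) {o a v' : V} {c : V → Fin (k - 1)}
    (hv : Valid A m o c) (hoa : A o a) (hv'o : A v' o) (hedge : adjU A a v')
    (hne : c v' ≠ c a) : False := by
  have hao : a ≠ o := fun h => hg.noloop o (by rw [h] at hoa; exact hoa)
  have hv'oNe : v' ≠ o := fun h => hg.noloop o (by rw [h] at hv'o; exact hv'o)
  have hav' : a ≠ v' := fun h => hg.hor o a hoa (by rw [h]; exact hv'o)
  refine hg.walkWin hv hoa v' [] ?_ ?_ ?_ ?_
  · exact List.chain_cons.mpr ⟨hedge, List.Chain.nil⟩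
  · simp [List.nodup_cons, hao.symm, hv'oNe.symm, hav']
  · intro v hv'
    simp at hv'
  · left
    exact ⟨hv'o, hne⟩

/-- W2: with token at `o`, two out-neighbours of `o` joined by an arc have the
same color. -/
lemma Good.W2 (hg : Good A m k) {o a x : V} {c : V → Fin (k - 1)}
    (hv : Valid A m o c) (hoa : A o a) (hox : A o x) (hxa : A x a)
    (hne : c x ≠ c a) : False := by
  classical
  have hao : a ≠ o := fun h => hg.noloop o (by rw [h] at hoa; exact hoa)
  have hxo : x ≠ o := fun h => hg.noloop o (by rw [h] at hox; exact hox)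
  have hxa' : x ≠ a := fun h => hg.noloop a (by rw [h] at hxa; exact hxa)
  have hAxo : ¬ A x o := hg.hor o x hox
  -- token o → a → x
  have hval1 : Valid A m a (Function.update c o (c a)) := hg.swap hv (Or.inl hoa) hao
  have hc1x : Function.update c o (c a) x = c x := by
    rw [Function.update_apply, if_neg hxo]
  have hval2 : Valid A m x
      (Function.update (Function.update c o (c a)) a (Function.update c o (c a) x)) :=
    hg.swap hval1 (Or.inr hxa) hxa'
  rw [hc1x] at hval2
  -- token o → x directly
  have hval3 : Valid A m x (Function.update c o (c x)) := hg.swap hv (Or.inl hox) hxo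
  have ht2 := (hg.tight hval2 (c x)).1
  have ht3 := (hg.tight hval3 (c x)).1
  unfold cntO at ht2 ht3
  set c₂ := Function.update (Function.update c o (c a)) a (c x) with hc₂
  set cS := Function.update c o (c x) with hcS
  have hset : (Finset.univ.erase x).filter (fun v => c₂ v = c x ∧ A x v)
      = insert a ((Finset.univ.erase x).filter (fun v => cS v = c x ∧ A x v)) := by
    ext v
    by_cases hva : v = a
    · subst hva
      have : c₂ v = c x := by rw [hc₂, Function.update_apply, if_pos rfl]
      simp [this, hxa, Ne.symm hxa']
    · by_cases hvo : v = o
      · subst hvo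
        have h1 : c₂ v = c a := by
          rw [hc₂, Function.update_apply, if_neg (Ne.symm hao), Function.update_apply,
            if_pos rfl]
        have h2 : cS v = c x := by rw [hcS, Function.update_apply, if_pos rfl]
        simp [h1, h2, hAxo, hva]
      · have h1 : c₂ v = c v := by
          rw [hc₂, Function.update_apply, if_neg hva, Function.update_apply, if_neg hvo]
        have h2 : cS v = c v := by rw [hcS, Function.update_apply, if_neg hvo]
        simp [h1, h2, hva]
  have hnotmem : a ∉ (Finset.univ.erase x).filter (fun v => cS v = c x ∧ A x v) := by
    have : cS a = c a := by rw [hcS, Function.update_apply, if_neg hao]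
    simp [this]
    intro _ h
    exact absurd h.symm hne
  rw [hset, Finset.card_insert_of_notMem hnotmem, ht3] at ht2
  omega

end Stmt7Aux

namespace Stmt7Aux

open Finset Function

set_option linter.unusedSectionVars false

variable {V : Type*} [Fintype V] [DecidableEq V]
variable {A : V → V → Prop} [DecidableRel A] {m k : ℕ}

lemma lastV_concat (s : List V) : ∀ (y z : V), lastV y (s ++ [z]) = z := by
  induction s with
  | nil => intro y z; rfl
  | cons p L ih =>
    intro y z
    rw [List.cons_append, lastV_cons]
    exact ih p z

lemma chain_take {R : V → V → Prop} :
    ∀ (s : List V) (y z : V) (t : List V), List.Chain R y (s ++ z :: t) →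
      List.Chain R y (s ++ [z]) := by
  intro s
  induction s with
  | nil =>
    intro y z t h
    simp only [List.nil_append] at h ⊢
    exact List.chain_cons.mpr ⟨(List.chain_cons.mp h).1, List.Chain.nil⟩
  | cons a s ih =>
    intro y z t h
    simp only [List.cons_append] at h ⊢
    have h' := List.chain_cons.mp h
    exact List.chain_cons.mpr ⟨h'.1, ih a z t h'.2⟩

lemma chain_concat_of {R : V → V → Prop} :
    ∀ (L : List V) (y z : V), List.Chain R y L → R (lastV y L) z →
      List.Chain R y (L ++ [z]) := by
  intro L
  induction L with
  | nil =>
    intro y z _ h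
    exact List.chain_cons.mpr ⟨h, List.Chain.nil⟩
  | cons p L ih =>
    intro y z hch h
    rw [lastV_cons] at h
    have h' := List.chain_cons.mp hch
    simp only [List.cons_append]
    exact List.chain_cons.mpr ⟨h'.1, ih p z h'.2 h⟩

/-- Extract a self-avoiding chain from a reflexive-transitive closure walk. -/
lemma chainOfRTG {bad : V → Prop} {y z₀ : V}
    (h : Relation.ReflTransGen (fun b z => adjU A b z ∧ ¬ bad z) y z₀) :
    ∃ L : List V, List.Chain (adjU A) y L ∧ lastV y L = z₀ ∧ (y :: L).Nodup ∧
      ∀ v ∈ L, ¬ bad v := by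
  classical
  induction h with
  | refl => exact ⟨[], List.Chain.nil, rfl, List.nodup_singleton y, by simp⟩
  | @tail b z hyb hbz ih =>
    obtain ⟨L, hch, hlast, hnd, hprop⟩ := ih
    by_cases hzy : z = y
    · exact ⟨[], List.Chain.nil, hzy.symm, List.nodup_singleton y, by simp⟩
    · by_cases hzL : z ∈ L
      · obtain ⟨s, t, hst⟩ := List.append_of_mem hzL
        refine ⟨s ++ [z], ?_, lastV_concat s y z, ?_, ?_⟩
        · rw [hst] at hch
          exact chain_take s y z t hch
        · have hsub : (y :: (s ++ [z])).Sublist (y :: L) := by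
            rw [hst]
            refine List.Sublist.cons₂ y ?_
            exact List.Sublist.append_left (by
              exact List.cons_sublist_cons.mpr (List.nil_sublist t)) s
          exact hnd.sublist hsub
        · intro v hv
          rw [List.mem_append] at hv
          rcases hv with hv | hv
          · exact hprop v (by rw [hst]; exact List.mem_append_left _ hv)
          · simp only [List.mem_singleton] at hv
            subst hv
            exact hbz.2
      · refine ⟨L ++ [z], ?_, lastV_concat L y z, ?_, ?_⟩
        · exact chain_concat_of L y z hch (by rw [hlast]; exact hbz.1)
        · have : (y :: (L ++ [z])) = (y :: L) ++ [z] := by simp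
          rw [this]
          rw [List.nodup_append]
          refine ⟨hnd, List.nodup_singleton z, ?_⟩
          intro v hv
          simp only [List.mem_singleton]
          intro w hw hveq
          subst hw
          subst hveq
          simp only [List.mem_cons] at hv
          rcases hv with hv | hv
          · exact hzy hv
          · exact hzL hv
        · intro v hv
          rw [List.mem_append] at hv
          rcases hv with hv | hv
          · exact hprop v hv
          · simp only [List.mem_singleton] at hv
            subst hv
            exact hbz.2

end Stmt7Aux

namespace Stmt7Aux

open Finset Function

set_option linter.unusedSectionVars false

variable {V : Type*} [Fintype V] [DecidableEq V]
variable {A : V → V → Prop} [DecidableRel A] {m k : ℕ}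

/-- One step of the infinite descent. -/
lemma Good.descent (hg : Good A m k) {o a x : V} {c : V → Fin (k - 1)}
    (hv : Valid A m o c) (hoa : A o a) (hax : A a x) (hnadj : ¬ adjU A o x)
    (hxo : x ≠ o) (hne : c x ≠ c a) :
    ∃ (y : V) (c' : V → Fin (k - 1)), Valid A m a c' ∧ A a x ∧ A x y ∧
      ¬ adjU A a y ∧ y ≠ a ∧ c' y ≠ c' x ∧
      Set.ncard {z | Relation.ReflTransGen
          (fun b z => adjU A b z ∧ ¬ (adjU A a z ∨ z = a)) y z}
        < Set.ncard {z | Relation.ReflTransGen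
          (fun b z => adjU A b z ∧ ¬ (adjU A o z ∨ z = o)) x z} := by
  classical
  have hao : a ≠ o := fun h => hg.noloop o (by rw [h] at hoa; exact hoa)
  have hxa : x ≠ a := fun h => hg.noloop a (by rw [h] at hax; exact hax)
  set c₁ := Function.update c o (c a) with hc₁
  have hval1 : Valid A m a c₁ := hg.swap hv (Or.inl hoa) hao
  have hc₁x : c₁ x = c x := by rw [hc₁, Function.update_apply, if_neg hxo]
  set c₂ := Function.update c₁ a (c₁ x) with hc₂
  have hval2 : Valid A m x c₂ := hg.swap hval1 (Or.inl hax) hxa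
  have ht := (hg.tight hval2 (c a)).1
  have hpos : 0 < ((Finset.univ.erase x).filter (fun v => c₂ v = c a ∧ A x v)).card := by
    have : cntO A c₂ x (c a) x
        = ((Finset.univ.erase x).filter (fun v => c₂ v = c a ∧ A x v)).card := rfl
    rw [← this, ht]
    exact hg.hm
  obtain ⟨y, hy⟩ := Finset.card_pos.mp hpos
  simp only [Finset.mem_filter, Finset.mem_erase, Finset.mem_univ, true_and,
    and_true] at hy
  obtain ⟨hyx, hyca, hAxy⟩ := hy
  have hyo : y ≠ o := fun h => hnadj (Or.inr (by rw [← h]; exact hAxy))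
  have hya : y ≠ a := by
    intro h
    have h2 : c₂ a = c₁ x := by rw [hc₂, Function.update_apply, if_pos rfl]
    rw [h, h2, hc₁x] at hyca
    exact hne hyca
  have hcy : c y = c a := by
    have h1 : c₂ y = c₁ y := by rw [hc₂, Function.update_apply, if_neg hya]
    have h2 : c₁ y = c y := by rw [hc₁, Function.update_apply, if_neg hyo]
    rw [h1, h2] at hyca
    exact hyca
  have hc₁y : c₁ y = c y := by rw [hc₁, Function.update_apply, if_neg hyo]
  have hc₁ne : c₁ y ≠ c₁ x := by
    rw [hc₁x, hc₁y, hcy]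
    exact fun h => hne h.symm
  have hnady : ¬ adjU A a y := by
    rintro (hay | hya2)
    · exact hg.W2 hval1 hay hax hAxy (by rw [hc₁x, hc₁y, hcy]; exact hne)
    · exact hg.W1 hval1 hax hya2 (Or.inl hAxy) hc₁ne
  -- Claim 1: everything reachable from y avoiding N(a) ∪ {a} is non-adjacent to o
  have claim1 : ∀ z, Relation.ReflTransGen
      (fun b z => adjU A b z ∧ ¬ (adjU A a z ∨ z = a)) y z → ¬ adjU A o z := by
    intro z hz hadjoz
    obtain ⟨L, hch, hlast, hnd, hprop⟩ := chainOfRTG hz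
    have hnoL : o ∉ y :: L := by
      intro h
      simp only [List.mem_cons] at h
      rcases h with h | h
      · exact hyo h.symm
      · exact (hprop o h) (Or.inl (Or.inr hoa))
    apply hg.walkWin hval1 hax y (L ++ [o]) ?_ ?_ ?_ ?_
    · -- chain
      refine List.chain_cons.mpr ⟨Or.inl hAxy, ?_⟩
      refine chain_concat_of L y o hch ?_
      rw [hlast]
      rcases hadjoz with h | h
      · exact Or.inr h
      · exact Or.inl h
    · -- nodup
      have hnd2 : (y :: (L ++ [o])).Nodup := by
        have heq : y :: (L ++ [o]) = (y :: L) ++ [o] := by simp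
        rw [heq, List.nodup_append]
        refine ⟨hnd, List.nodup_singleton o, ?_⟩
        intro v hvm
        simp only [List.mem_singleton]
        intro w hw h
        subst hw
        subst h
        exact hnoL hvm
      have hxnot : x ∉ y :: (L ++ [o]) := by
        simp only [List.mem_cons, List.mem_append, List.mem_singleton,
          List.not_mem_nil, or_false]
        rintro (h | h | h)
        · exact hyx h.symm
        · exact (hprop x h) (Or.inl (Or.inl hax))
        · exact hxo h
      have hanot : a ∉ x :: y :: (L ++ [o]) := by
        simp only [List.mem_cons, List.mem_append, List.mem_singleton,
          List.not_mem_nil, or_false]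
        rintro (h | h | h | h)
        · exact hxa h.symm
        · exact hya h.symm
        · exact (hprop a h) (Or.inr rfl)
        · exact hao h
      exact List.nodup_cons.mpr ⟨hanot, List.nodup_cons.mpr ⟨hxnot, hnd2⟩⟩
    · -- interior
      intro v hvm
      have heq : (y :: (L ++ [o])).dropLast = y :: L := by
        have h1 : y :: (L ++ [o]) = (y :: L) ++ [o] := by simp
        rw [h1, List.dropLast_concat]
      rw [heq] at hvm
      simp only [List.mem_cons] at hvm
      rcases hvm with hvm | hvm
      · subst hvm
        exact fun h => hnady (Or.inl h)
      · exact fun h => (hprop v hvm) (Or.inl (Or.inl h))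
    · -- win condition
      left
      rw [lastV_concat L y o]
      exact ⟨hoa, hc₁ne⟩
  -- lifting reachability
  have hlift : ∀ z, Relation.ReflTransGen
      (fun b z => adjU A b z ∧ ¬ (adjU A a z ∨ z = a)) y z →
      Relation.ReflTransGen
      (fun b z => adjU A b z ∧ ¬ (adjU A o z ∨ z = o)) x z := by
    intro z hz
    induction hz with
    | refl =>
      refine Relation.ReflTransGen.single ⟨Or.inl hAxy, ?_⟩
      rintro (h | h)
      · exact claim1 y Relation.ReflTransGen.refl h
      · exact hyo h
    | @tail b z hyb hbz ih =>
      refine Relation.ReflTransGen.tail ih ⟨hbz.1, ?_⟩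
      rintro (h | h)
      · exact claim1 z (hyb.tail hbz) h
      · exact hbz.2 (Or.inl (by rw [h]; exact Or.inr hoa))
  have hxnotmem : x ∉ {z | Relation.ReflTransGen
      (fun b z => adjU A b z ∧ ¬ (adjU A a z ∨ z = a)) y z} := by
    intro hz
    rcases Relation.ReflTransGen.cases_tail hz with h | ⟨b, _, hb⟩
    · exact hg.noloop x (by rw [← h] at hAxy; exact hAxy)
    · exact hb.2 (Or.inl (Or.inl hax))
  refine ⟨y, c₁, hval1, hax, hAxy, hnady, hya, hc₁ne, ?_⟩
  apply Set.ncard_lt_ncard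
  · constructor
    · intro z hz
      exact hlift z hz
    · intro hcontra
      exact hxnotmem (hcontra Relation.ReflTransGen.refl)
  · exact Set.toFinite _

/-- The main contradiction: no `Good` structure with `k ≥ 3` exists. -/
lemma Good.false (hg : Good A m k) : False := by
  classical
  have hk := hg.hk
  have hm := hg.hm
  -- V is nonempty
  cases isEmpty_or_nonempty V with
  | inl hE =>
    have h0 : (0 : ℕ) ∈ {n | ∃ c : V → Fin n, ∀ i,
        WeaklyDegOn A m (Finset.univ.filter (fun v => c v = i))} := by
      refine ⟨fun v => (hE.false v).elim, ?_⟩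
      intro i
      exact i.elim0
    have hle : chiDegOn A m (Finset.univ : Finset V) ≤ 0 := Nat.sInf_le h0
    rw [hg.hchi] at hle
    omega
  | inr hne =>
    -- set of measures of configurations
    set MS : Set ℕ := {n | ∃ (o a x : V) (c : V → Fin (k - 1)),
      (Valid A m o c ∧ A o a ∧ A a x ∧ ¬ adjU A o x ∧ x ≠ o ∧ c x ≠ c a) ∧
      Set.ncard {z | Relation.ReflTransGen
        (fun b z => adjU A b z ∧ ¬ (adjU A o z ∨ z = o)) x z} = n} with hMS
    -- initial configuration exists
    have hMSne : MS.Nonempty := by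
      obtain ⟨o⟩ := hne
      obtain ⟨c, hv⟩ := hg.existsColoring o
      -- a : out-neighbour of o
      have hpos : 0 < (Finset.univ.filter (fun v => A o v)).card := by
        have := (hg.hdeg o).1
        rw [outDegOn] at this
        rw [this]
        have : 1 ≤ (k - 1) * m := by
          have := hg.hk; have := hg.hm
          calc 1 ≤ 1 * 1 := by omega
            _ ≤ (k - 1) * m := Nat.mul_le_mul (by omega) hm
        omega
      obtain ⟨a, ha⟩ := Finset.card_pos.mp hpos
      simp only [Finset.mem_filter, Finset.mem_univ, true_and] at ha
      have hao : a ≠ o := fun h => hg.noloop o (by rw [h] at ha; exact ha)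
      set c₁ := Function.update c o (c a) with hc₁
      have hval1 : Valid A m a c₁ := hg.swap hv (Or.inl ha) hao
      -- a color different from c a
      have hk1 : 2 ≤ k - 1 := by omega
      have h0lt : 0 < k - 1 := by omega
      have h1lt : 1 < k - 1 := by omega
      set j : Fin (k - 1) := if c a = ⟨0, h0lt⟩ then ⟨1, h1lt⟩ else ⟨0, h0lt⟩ with hj
      have hjne : j ≠ c a := by
        rw [hj]
        split_ifs with h
        · rw [h]
          intro hcontra
          have := congrArg Fin.val hcontra
          simp at this
        · exact fun hcontra => h hcontra.symm
      have ht := (hg.tight hval1 j).1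
      have hpos2 : 0 < ((Finset.univ.erase a).filter (fun v => c₁ v = j ∧ A a v)).card := by
        have heq : cntO A c₁ a j a
            = ((Finset.univ.erase a).filter (fun v => c₁ v = j ∧ A a v)).card := rfl
        rw [← heq, ht]
        exact hm
      obtain ⟨x, hx⟩ := Finset.card_pos.mp hpos2
      simp only [Finset.mem_filter, Finset.mem_erase, Finset.mem_univ, true_and,
        and_true] at hx
      obtain ⟨hxa, hxj, hAax⟩ := hx
      have hxo : x ≠ o := by
        intro h
        rw [h] at hxj
        rw [hc₁, Function.update_apply, if_pos rfl] at hxj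
        exact hjne hxj.symm
      have hcx : c x = j := by
        rw [hc₁, Function.update_apply, if_neg hxo] at hxj
        exact hxj
      have hnecxca : c x ≠ c a := by
        rw [hcx]
        exact hjne
      have hnadj : ¬ adjU A o x := by
        rintro (hox | hxo')
        · exact hg.W2 hv hox ha hAax (fun h => hnecxca h.symm)
        · exact hg.W1 hv ha hxo' (Or.inl hAax) hnecxca
      exact ⟨_, o, a, x, c, ⟨hv, ha, hAax, hnadj, hxo, hnecxca⟩, rfl⟩
    -- take the minimal configuration
    have hmem := Nat.sInf_mem hMSne
    obtain ⟨o, a, x, c, ⟨hv, hoa, hax, hnadj, hxo, hnec⟩, hcard⟩ := hmem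
    obtain ⟨y, c', hval', hax', hAxy, hnady, hya, hc'ne, hlt⟩ :=
      hg.descent hv hoa hax hnadj hxo hnec
    have hyo' : y ≠ a := hya
    have hmem2 : Set.ncard {z | Relation.ReflTransGen
        (fun b z => adjU A b z ∧ ¬ (adjU A a z ∨ z = a)) y z} ∈ MS :=
      ⟨a, x, y, c', ⟨hval', hax', hAxy, hnady, hya, hc'ne⟩, rfl⟩
    have hge := Nat.sInf_le hmem2
    rw [hcard] at hlt
    omega

end Stmt7Aux
theorem stmt7 [Fintype V] [DecidableEq V] (A : V → V → Prop) [DecidableRel A]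
    (m k : ℕ) (hm : 1 ≤ m) (hor : Oriented A)
    (hchi : chiDegOn A m Finset.univ = k)
    (hcrit : ∀ v : V, chiDegOn A m (Finset.univ.erase v) < k)
    (hdeg : ∀ v : V, outDegOn A Finset.univ v = (k - 1) * m ∧
      inDegOn A Finset.univ v = (k - 1) * m) :
    k ≤ 2 := by
  by_contra h
  push_neg at h
  exact Stmt7Aux.Good.false (A := A) ⟨hm, hor, by omega, hchi, hcrit, hdeg⟩
end

section
/- If D is a (k,1)-critical oriented graph in which each vertex v satisfies d⁺(v) = d⁻(v) = k - 1, then k ≤ 2. -/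
open Finset

variable {V : Type*}

set_option linter.unusedSectionVars false
set_option maxHeartbeats 1000000

section Stmt8Aux

open Relation

variable {V : Type*} [Fintype V] [DecidableEq V]

lemma oriented_irrefl {A : V → V → Prop} (hor : Oriented A) (x : V) : ¬ A x x :=
  fun h => hor x x h h

lemma acyclicOn_mono {A : V → V → Prop} {S T : Finset V} (hST : S ⊆ T)
    (hT : AcyclicOn A T) : AcyclicOn A S := by
  intro ⟨v, hv, hw⟩
  exact hT ⟨v, hST hv, Relation.TransGen.mono (fun a b ⟨ha, hb, hab⟩ => ⟨hST ha, hST hb, hab⟩) _ _ hw⟩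

lemma acyclicOn_empty (A : V → V → Prop) : AcyclicOn A (∅ : Finset V) := by
  rintro ⟨v, hv, -⟩
  exact absurd hv (Finset.notMem_empty v)

lemma acyclicOn_of_subsingleton {A : V → V → Prop} (hirr : ∀ x, ¬ A x x)
    {S : Finset V} (hS : S.card ≤ 1) : AcyclicOn A S := by
  rintro ⟨v, hv, hw⟩
  rcases (Relation.TransGen.head'_iff).mp hw with ⟨c, ⟨ha, hc, hac⟩, -⟩
  have hvc : v = c := Finset.card_le_one.mp hS v ha c hc
  exact hirr v (hvc ▸ hac)

/-- flipping the relation preserves acyclicity -/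
lemma acyclicOn_flip {A : V → V → Prop} {S : Finset V} :
    AcyclicOn (fun a b => A b a) S ↔ AcyclicOn A S := by
  have key : ∀ (B : V → V → Prop) (v : V),
      Relation.TransGen (fun x y => x ∈ S ∧ y ∈ S ∧ B y x) v v →
      Relation.TransGen (fun x y => x ∈ S ∧ y ∈ S ∧ B x y) v v := by
    intro B v hw
    have h1 : Relation.TransGen (Function.swap (fun x y => x ∈ S ∧ y ∈ S ∧ B x y)) v v := by
      refine Relation.TransGen.mono ?_ _ _ hw
      rintro a b ⟨ha, hb, hab⟩
      exact ⟨hb, ha, hab⟩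
    exact Relation.transGen_swap.mp h1
  constructor
  · intro h ⟨v, hv, hw⟩
    exact h ⟨v, hv, key (fun a b => A b a) v hw⟩
  · intro h ⟨v, hv, hw⟩
    exact h ⟨v, hv, key A v hw⟩

/-- Inserting a vertex with no out-neighbor in an acyclic set keeps it acyclic. -/
lemma acyclicOn_insert_out {A : V → V → Prop} (hirr : ∀ x, ¬ A x x) {S : Finset V} {x : V}
    (hS : AcyclicOn A S) (hout : ∀ y ∈ S, ¬ A x y) :
    AcyclicOn A (insert x S) := by
  rintro ⟨w, hw, hwalk⟩
  have hxstep : ∀ y, ¬ (x ∈ insert x S ∧ y ∈ insert x S ∧ A x y) := by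
    rintro y ⟨-, hy, hxy⟩
    rcases Finset.mem_insert.mp hy with rfl | hy'
    · exact hirr _ hxy
    · exact hout y hy' hxy
  have hfromx : ∀ b, ¬ Relation.TransGen
      (fun a b => a ∈ insert x S ∧ b ∈ insert x S ∧ A a b) x b := by
    intro b hb
    rcases (Relation.TransGen.head'_iff).mp hb with ⟨c, h, -⟩
    exact hxstep c h
  have key : ∀ a b, Relation.TransGen
      (fun a b => a ∈ insert x S ∧ b ∈ insert x S ∧ A a b) a b → a ≠ x →
      b = x ∨ Relation.TransGen (fun a b => a ∈ S ∧ b ∈ S ∧ A a b) a b := by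
    intro a b hab
    induction hab using Relation.TransGen.head_induction_on with
    | single h =>
      intro ha
      rcases h with ⟨ha', hb', hA⟩
      by_cases hbx : b = x
      · exact Or.inl hbx
      · refine Or.inr (Relation.TransGen.single ⟨?_, ?_, hA⟩)
        · rcases Finset.mem_insert.mp ha' with h | h
          · exact absurd h ha
          · exact h
        · rcases Finset.mem_insert.mp hb' with h | h
          · exact absurd h hbx
          · exact h
    | head h' hrest ih =>
      rename_i a' c
      intro ha
      rcases h' with ⟨ha', hc', hA⟩
      by_cases hcx : c = x
      · subst hcx
        exact absurd hrest (hfromx b)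
      · rcases ih hcx with rfl | htail
        · left; rfl
        · right
          refine Relation.TransGen.head ⟨?_, ?_, hA⟩ htail
          · rcases Finset.mem_insert.mp ha' with h | h
            · exact absurd h ha
            · exact h
          · rcases Finset.mem_insert.mp hc' with h | h
            · exact absurd h hcx
            · exact h
  rcases Finset.mem_insert.mp hw with rfl | hwS
  · exact hfromx w hwalk
  · have hwx : w ≠ x := by
      rintro rfl
      exact hfromx w hwalk
    rcases key w w hwalk hwx with h | h
    · exact hwx h
    · exact hS ⟨w, hwS, h⟩

/-- Inserting a vertex with no in-neighbor in an acyclic set keeps it acyclic. -/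
lemma acyclicOn_insert_in {A : V → V → Prop} (hirr : ∀ x, ¬ A x x) {S : Finset V} {x : V}
    (hS : AcyclicOn A S) (hin : ∀ y ∈ S, ¬ A y x) :
    AcyclicOn A (insert x S) := by
  rw [← acyclicOn_flip]
  exact acyclicOn_insert_out (A := fun a b => A b a)
    (fun z hz => hirr z hz) (acyclicOn_flip.mpr hS) hin

end Stmt8Aux
section Stmt8Aux2

open Relation

variable {V : Type*} [Fintype V] [DecidableEq V]

/-- `S` can be partitioned into `m` acyclic classes. -/
def Colorable (A : V → V → Prop) (S : Finset V) (m : ℕ) : Prop :=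
  ∃ c : V → Fin m, ∀ i, AcyclicOn A (S.filter (fun v => c v = i))

lemma colorable_mono_set {A : V → V → Prop} {S T : Finset V} {m : ℕ}
    (hST : S ⊆ T) (h : Colorable A T m) : Colorable A S m := by
  obtain ⟨c, hc⟩ := h
  exact ⟨c, fun i => acyclicOn_mono (Finset.filter_subset_filter _ hST) (hc i)⟩

lemma colorable_mono_colors {A : V → V → Prop} {S : Finset V} {m m' : ℕ}
    (hmm : m ≤ m') (h : Colorable A S m) : Colorable A S m' := by
  obtain ⟨c, hc⟩ := h
  refine ⟨fun v => Fin.castLE hmm (c v), fun i => ?_⟩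
  by_cases hi : (i : ℕ) < m
  · have : S.filter (fun v => Fin.castLE hmm (c v) = i)
        = S.filter (fun v => c v = ⟨i, hi⟩) := by
      apply Finset.filter_congr
      intro v _
      constructor
      · intro h'
        exact Fin.ext (by simpa using congrArg Fin.val h')
      · intro h'
        exact Fin.ext (by simpa using congrArg Fin.val h')
    rw [this]
    exact hc _
  · have : S.filter (fun v => Fin.castLE hmm (c v) = i) = ∅ := by
      apply Finset.filter_eq_empty_iff.mpr
      intro v _
      intro h'
      exact hi (h' ▸ (by simpa using (c v).isLt))
    rw [this]
    exact acyclicOn_empty A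
  
lemma colorable_card {A : V → V → Prop} (hirr : ∀ x, ¬ A x x) (S : Finset V) :
    Colorable A S (Fintype.card V) := by
  obtain ⟨f⟩ := Fintype.truncEquivFin V
  refine ⟨fun v => f v, fun i => ?_⟩
  apply acyclicOn_of_subsingleton hirr
  apply Finset.card_le_one.mpr
  intro a ha b hb
  simp only [Finset.mem_filter] at ha hb
  exact f.injective (ha.2.trans hb.2.symm)

lemma chi_le_of_colorable {A : V → V → Prop} {S : Finset V} {m : ℕ}
    (h : Colorable A S m) : chiAcyclicOn A S ≤ m :=
  Nat.sInf_le h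

lemma colorable_of_chi_le {A : V → V → Prop} (hirr : ∀ x, ¬ A x x) {S : Finset V} {m : ℕ}
    (h : chiAcyclicOn A S ≤ m) : Colorable A S m := by
  have hne : {k | ∃ c : V → Fin k, ∀ i, AcyclicOn A (S.filter (fun v => c v = i))}.Nonempty :=
    ⟨Fintype.card V, colorable_card hirr S⟩
  have hmem := Nat.sInf_mem hne
  exact colorable_mono_colors h hmem

end Stmt8Aux2
section Stmt8Aux3

open Relation

variable {V : Type*} [Fintype V] [DecidableEq V]

/-- underlying adjacency -/
def Adj (A : V → V → Prop) (a b : V) : Prop := A a b ∨ A b a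

lemma adj_symm {A : V → V → Prop} {a b : V} (h : Adj A a b) : Adj A b a := h.symm

/-- reachability in the underlying graph restricted to `U` -/
def ReachOn (A : V → V → Prop) (U : Finset V) (a b : V) : Prop :=
  Relation.ReflTransGen (fun x y => x ∈ U ∧ y ∈ U ∧ Adj A x y) a b

lemma reachOn_refl {A : V → V → Prop} {U : Finset V} (a : V) : ReachOn A U a a :=
  Relation.ReflTransGen.refl

lemma reachOn_symm {A : V → V → Prop} {U : Finset V} {a b : V}
    (h : ReachOn A U a b) : ReachOn A U b a := by
  induction h with
  | refl => exact Relation.ReflTransGen.refl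
  | tail _ hxy ih => exact ih.head ⟨hxy.2.1, hxy.1, adj_symm hxy.2.2⟩

lemma reachOn_trans {A : V → V → Prop} {U : Finset V} {a b c : V}
    (h1 : ReachOn A U a b) (h2 : ReachOn A U b c) : ReachOn A U a c :=
  Relation.ReflTransGen.trans h1 h2

lemma reachOn_mono {A : V → V → Prop} {U U' : Finset V} (hUU : U ⊆ U') {a b : V}
    (h : ReachOn A U a b) : ReachOn A U' a b := by
  refine Relation.ReflTransGen.mono ?_ _ _ h
  rintro x y ⟨hx, hy, hxy⟩
  exact ⟨hUU hx, hUU hy, hxy⟩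

lemma reachOn_mem_right {A : V → V → Prop} {U : Finset V} {a b : V}
    (ha : a ∈ U) (h : ReachOn A U a b) : b ∈ U := by
  induction h with
  | refl => exact ha
  | tail _ h2 ih => exact h2.2.1

/-- connected component of `y` inside `U` -/
noncomputable def compF (A : V → V → Prop) (U : Finset V) (y : V) : Finset V :=
  @Finset.filter V (fun z => ReachOn A U y z) (fun _ => Classical.propDecidable _) U

lemma mem_compF {A : V → V → Prop} {U : Finset V} {y z : V} :
    z ∈ compF A U y ↔ z ∈ U ∧ ReachOn A U y z := by
  simp [compF, Finset.mem_filter]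

lemma compF_subset {A : V → V → Prop} {U : Finset V} {y : V} : compF A U y ⊆ U :=
  fun z hz => (mem_compF.mp hz).1

lemma self_mem_compF {A : V → V → Prop} {U : Finset V} {y : V} (hy : y ∈ U) :
    y ∈ compF A U y := mem_compF.mpr ⟨hy, reachOn_refl y⟩

lemma compF_closed {A : V → V → Prop} {U : Finset V} {y z w : V}
    (hz : z ∈ compF A U y) (hw : w ∈ U) (hzw : Adj A z w) : w ∈ compF A U y := by
  rcases mem_compF.mp hz with ⟨hzU, hreach⟩
  exact mem_compF.mpr ⟨hw, hreach.tail ⟨hzU, hw, hzw⟩⟩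

/-- members of the same component reach each other -/
lemma reach_of_mem_compF {A : V → V → Prop} {U : Finset V} {y z : V}
    (hz : z ∈ compF A U y) : ReachOn A U y z := (mem_compF.mp hz).2

/-- a reach path starting in `T` and ending outside exits through an edge -/
lemma exists_exit {A : V → V → Prop} {U : Finset V} {a b : V} {T : Finset V}
    (h : ReachOn A U a b) (ha : a ∈ T) (hb : b ∉ T) :
    ∃ t ∈ T, ∃ w ∈ U, w ∉ T ∧ Adj A t w ∧ t ∈ U := by
  induction h with
  | refl => exact absurd ha hb
  | tail h1 h2 ih =>
    rename_i mid fin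
    by_cases hm : mid ∈ T
    · exact ⟨mid, hm, fin, h2.2.1, hb, h2.2.2, h2.1⟩
    · exact ih hm

/-- `U` is disconnected (in the underlying graph) -/
def DisconnOn (A : V → V → Prop) (U : Finset V) : Prop :=
  ∃ a ∈ U, ∃ b ∈ U, ¬ ReachOn A U a b

end Stmt8Aux3
section Stmt8Aux4

open Relation

variable {V : Type*} [Fintype V] [DecidableEq V]

/-- Closed-walk confinement: if steps never cross directly between `P`-side and
`Q`-side (they may pass through `x`), then a closed walk yields a closed walk
confined to one side (together with `x`). -/
lemma closed_walk_confine {R : V → V → Prop} {P Q : V → Prop} {x : V}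
    (hstep : ∀ a b, R a b → (P a ∨ a = x ∨ Q a) ∧ (P b ∨ b = x ∨ Q b)
      ∧ ¬(P a ∧ Q b) ∧ ¬(Q a ∧ P b))
    (hPx : ¬ P x) (hQx : ¬ Q x) (hPQ : ∀ a, ¬ (P a ∧ Q a))
    {w : V} (hw : Relation.TransGen R w w) :
    (∃ w', Relation.TransGen (fun a b => R a b ∧ (P a ∨ a = x) ∧ (P b ∨ b = x)) w' w') ∨
    (∃ w', Relation.TransGen (fun a b => R a b ∧ (Q a ∨ a = x) ∧ (Q b ∨ b = x)) w' w') := by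
  -- helper H2 : a Q-started walk ending on the P-side must hit x through Q-steps
  have H2 : ∀ (P Q : V → Prop), (∀ a b, R a b → (P a ∨ a = x ∨ Q a) ∧ (P b ∨ b = x ∨ Q b)
      ∧ ¬(P a ∧ Q b) ∧ ¬(Q a ∧ P b)) → (∀ a, ¬ (P a ∧ Q a)) → ¬ P x → ¬ Q x →
      ∀ c b, Relation.TransGen R c b → Q c → (P b ∨ b = x) →
      Relation.TransGen (fun a b => R a b ∧ (Q a ∨ a = x) ∧ (Q b ∨ b = x)) c x := by
    intro P Q hstep hPQ hPx hQx c b hcb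
    induction hcb using Relation.TransGen.head_induction_on with
    | single h =>
      intro hc hbside
      have := hstep _ _ h
      rcases hbside with hPb | rfl
      · exact absurd ⟨hc, hPb⟩ (this.2.2.2)
      · exact Relation.TransGen.single ⟨h, Or.inl hc, Or.inr rfl⟩
    | head h' hrest ih =>
      rename_i a' c'
      intro ha' hbside
      have hsides := hstep _ _ h'
      rcases hsides.2.1 with hPc' | rfl | hQc'
      · exact absurd ⟨ha', hPc'⟩ hsides.2.2.2
      · exact Relation.TransGen.single ⟨h', Or.inl ha', Or.inr rfl⟩
      · exact Relation.TransGen.head ⟨h', Or.inl ha', Or.inl hQc'⟩ (ih hQc' hbside)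
  -- helper H1
  have H1 : ∀ (P Q : V → Prop), (∀ a b, R a b → (P a ∨ a = x ∨ Q a) ∧ (P b ∨ b = x ∨ Q b)
      ∧ ¬(P a ∧ Q b) ∧ ¬(Q a ∧ P b)) → (∀ a, ¬ (P a ∧ Q a)) → ¬ P x → ¬ Q x →
      ∀ a b, Relation.TransGen R a b → (P a ∨ a = x) → (P b ∨ b = x) →
      Relation.TransGen (fun a b => R a b ∧ (P a ∨ a = x) ∧ (P b ∨ b = x)) a b ∨
      (∃ w', Relation.TransGen (fun a b => R a b ∧ (Q a ∨ a = x) ∧ (Q b ∨ b = x)) w' w') := by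
    intro P Q hstep hPQ hPx hQx a b hab
    induction hab using Relation.TransGen.head_induction_on with
    | single h =>
      intro haside hbside
      exact Or.inl (Relation.TransGen.single ⟨h, haside, hbside⟩)
    | head h' hrest ih =>
      rename_i a' c'
      intro haside hbside
      have hsides := hstep _ _ h'
      rcases hsides.2.1 with hPc' | rfl | hQc'
      · rcases ih (Or.inl hPc') hbside with htail | hq
        · exact Or.inl (Relation.TransGen.head ⟨h', haside, Or.inl hPc'⟩ htail)
        · exact Or.inr hq
      · rcases ih (Or.inr rfl) hbside with htail | hq
        · exact Or.inl (Relation.TransGen.head ⟨h', haside, Or.inr rfl⟩ htail)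
        · exact Or.inr hq
      · -- we stepped into Q; the start must be x
        have hax : a' = x := by
          rcases haside with hPa' | rfl
          · exact absurd ⟨hPa', hQc'⟩ hsides.2.2.1
          · rfl
        have hcx := H2 P Q hstep hPQ hPx hQx c' b hrest hQc' hbside
        refine Or.inr ⟨x, Relation.TransGen.head ⟨hax ▸ h', Or.inr rfl, Or.inl hQc'⟩ hcx⟩
  -- main
  have hwside : P w ∨ w = x ∨ Q w := by
    rcases (Relation.TransGen.head'_iff).mp hw with ⟨c, hwc, -⟩
    exact (hstep _ _ hwc).1
  have hstep' : ∀ a b, R a b → (Q a ∨ a = x ∨ P a) ∧ (Q b ∨ b = x ∨ P b)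
      ∧ ¬(Q a ∧ P b) ∧ ¬(P a ∧ Q b) := by
    intro a b h
    have := hstep a b h
    refine ⟨?_, ?_, this.2.2.2, this.2.2.1⟩
    · rcases this.1 with h1 | h1 | h1
      · exact Or.inr (Or.inr h1)
      · exact Or.inr (Or.inl h1)
      · exact Or.inl h1
    · rcases this.2.1 with h1 | h1 | h1
      · exact Or.inr (Or.inr h1)
      · exact Or.inr (Or.inl h1)
      · exact Or.inl h1
  have hPQ' : ∀ a, ¬ (Q a ∧ P a) := fun a h => hPQ a ⟨h.2, h.1⟩
  rcases hwside with hPw | hwx | hQw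
  · rcases H1 P Q hstep hPQ hPx hQx w w hw (Or.inl hPw) (Or.inl hPw) with h | h
    · exact Or.inl ⟨w, h⟩
    · exact Or.inr h
  · rcases H1 P Q hstep hPQ hPx hQx w w hw (Or.inr hwx) (Or.inr hwx) with h | h
    · exact Or.inl ⟨w, h⟩
    · exact Or.inr h
  · rcases H1 Q P hstep' hPQ' hQx hPx w w hw (Or.inl hQw) (Or.inl hQw) with h | h
    · exact Or.inr ⟨w, h⟩
    · exact Or.inl h

end Stmt8Aux4
section Stmt8Aux5

open Relation

variable {V : Type*} [Fintype V] [DecidableEq V]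

/-- If deleting one vertex disconnects the underlying graph, glue colorings of
the two sides. -/
lemma case_cut {A : V → V → Prop} [DecidableRel A] (hor : Oriented A) {m : ℕ}
    (hcol : ∀ v : V, Colorable A (Finset.univ.erase v) m)
    {x : V} (hx : DisconnOn A (Finset.univ.erase x)) :
    Colorable A (Finset.univ : Finset V) m := by
  classical
  obtain ⟨y₀, hy₀, y₁', hy₁', hnr'⟩ := hx
  set U : Finset V := Finset.univ.erase x with hU
  set C : Finset V := compF A U y₀ with hC
  -- find a vertex outside C
  have hy₁ : ∃ y₁ ∈ U, y₁ ∉ C := by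
    refine ⟨y₁', hy₁', fun h => hnr' ?_⟩
    exact reach_of_mem_compF h
  obtain ⟨y₁, hy₁U, hy₁C⟩ := hy₁
  have hy₀C : y₀ ∈ C := self_mem_compF hy₀
  have hy₀x : y₀ ≠ x := Finset.ne_of_mem_erase hy₀
  have hy₁x : y₁ ≠ x := Finset.ne_of_mem_erase hy₁U
  have hxC : x ∉ C := fun h => (Finset.ne_of_mem_erase (compF_subset h)) rfl
  obtain ⟨c₁, hc₁⟩ := hcol y₁
  obtain ⟨c₂, hc₂⟩ := hcol y₀
  set σ : Fin m ≃ Fin m := Equiv.swap (c₂ x) (c₁ x) with hσ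
  have hσx : σ (c₂ x) = c₁ x := Equiv.swap_apply_left _ _
  refine ⟨fun y => if y ∈ C then c₁ y else σ (c₂ y), fun i => ?_⟩
  set c : V → Fin m := fun y => if y ∈ C then c₁ y else σ (c₂ y) with hc
  rintro ⟨w, hw, hwalk⟩
  -- set up confinement
  have hconf := closed_walk_confine
    (R := fun a b => a ∈ Finset.univ.filter (fun v => c v = i) ∧
      b ∈ Finset.univ.filter (fun v => c v = i) ∧ A a b)
    (P := fun z => z ∈ C) (Q := fun z => z ∈ U ∧ z ∉ C) (x := x)
    (fun a b hab => by
      have ha : a ∈ C ∨ a = x ∨ (a ∈ U ∧ a ∉ C) := by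
        by_cases h1 : a = x
        · exact Or.inr (Or.inl h1)
        by_cases h2 : a ∈ C
        · exact Or.inl h2
        · exact Or.inr (Or.inr ⟨Finset.mem_erase.mpr ⟨h1, Finset.mem_univ a⟩, h2⟩)
      have hb : b ∈ C ∨ b = x ∨ (b ∈ U ∧ b ∉ C) := by
        by_cases h1 : b = x
        · exact Or.inr (Or.inl h1)
        by_cases h2 : b ∈ C
        · exact Or.inl h2
        · exact Or.inr (Or.inr ⟨Finset.mem_erase.mpr ⟨h1, Finset.mem_univ b⟩, h2⟩)
      refine ⟨ha, hb, ?_, ?_⟩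
      · rintro ⟨haC, hbU, hbC⟩
        exact hbC (compF_closed haC hbU (Or.inl hab.2.2))
      · rintro ⟨⟨haU, haC⟩, hbC⟩
        exact haC (compF_closed hbC haU (Or.inr hab.2.2)))
    hxC (fun h => (Finset.ne_of_mem_erase h.1) rfl)
    (fun a h => h.2.2 h.1) hwalk
  rcases hconf with ⟨w', hw'⟩ | ⟨w', hw'⟩
  · -- C-side walk, contradicts c₁
    refine hc₁ i ⟨w', ?_, ?_⟩
    · rcases (Relation.TransGen.head'_iff).mp hw' with ⟨d, hstep, -⟩
      have hmem := (Finset.mem_filter.mp hstep.1.1).2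
      rcases hstep.2.1 with hwC | rfl
      · refine Finset.mem_filter.mpr ⟨Finset.mem_erase.mpr ⟨fun h => hy₁C (h ▸ hwC), Finset.mem_univ _⟩, ?_⟩
        simpa [hc, hwC] using hmem
      · refine Finset.mem_filter.mpr ⟨Finset.mem_erase.mpr ⟨Ne.symm hy₁x, Finset.mem_univ _⟩, ?_⟩
        simp only [hc, if_neg hxC] at hmem
        rw [← hσx]
        exact hmem
    · refine Relation.TransGen.mono ?_ _ _ hw'
      rintro a b ⟨⟨ha, hbmem, hab⟩, haside, hbside⟩
      have hamem := Finset.mem_filter.mp ha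
      have hbmem' := Finset.mem_filter.mp hbmem
      have haval : c₁ a = i := by
        rcases haside with haC | rfl
        · simpa [hc, haC] using hamem.2
        · have := hamem.2
          simp only [hc, if_neg hxC] at this
          rw [← this, hσx]
      have hbval : c₁ b = i := by
        rcases hbside with hbC | rfl
        · simpa [hc, hbC] using hbmem'.2
        · have := hbmem'.2
          simp only [hc, if_neg hxC] at this
          rw [← this, hσx]
      have haery : a ∈ Finset.univ.erase y₁ := by
        refine Finset.mem_erase.mpr ⟨?_, Finset.mem_univ _⟩
        rintro rfl
        rcases haside with haC | rfl
        · exact hy₁C haC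
        · exact hy₁x rfl
      have hbery : b ∈ Finset.univ.erase y₁ := by
        refine Finset.mem_erase.mpr ⟨?_, Finset.mem_univ _⟩
        rintro rfl
        rcases hbside with hbC | rfl
        · exact hy₁C hbC
        · exact hy₁x rfl
      exact ⟨Finset.mem_filter.mpr ⟨haery, haval⟩, Finset.mem_filter.mpr ⟨hbery, hbval⟩, hab⟩
  · -- B-side walk, contradicts c₂ with color σ⁻¹ i
    refine hc₂ (σ.symm i) ⟨w', ?_, ?_⟩
    · rcases (Relation.TransGen.head'_iff).mp hw' with ⟨d, hstep, -⟩
      have hamem := (Finset.mem_filter.mp hstep.1.1).2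
      rcases hstep.2.1 with ⟨hwU, hwC⟩ | rfl
      · have hval : σ (c₂ w') = i := by simpa [hc, hwC] using hamem
        refine Finset.mem_filter.mpr ⟨Finset.mem_erase.mpr ⟨fun h => hwC (h ▸ hy₀C), Finset.mem_univ _⟩, ?_⟩
        rw [← hval, Equiv.symm_apply_apply]
      · have hval : σ (c₂ w') = i := by simpa [hc, if_neg hxC] using hamem
        refine Finset.mem_filter.mpr ⟨Finset.mem_erase.mpr ⟨Ne.symm hy₀x, Finset.mem_univ _⟩, ?_⟩
        rw [← hval, Equiv.symm_apply_apply]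
    · refine Relation.TransGen.mono ?_ _ _ hw'
      rintro a b ⟨⟨ha, hbmem, hab⟩, haside, hbside⟩
      have hamem := Finset.mem_filter.mp ha
      have hbmem' := Finset.mem_filter.mp hbmem
      have haval : c₂ a = σ.symm i := by
        rcases haside with ⟨haU, haC⟩ | rfl
        · have : σ (c₂ a) = i := by simpa [hc, haC] using hamem.2
          rw [← this, Equiv.symm_apply_apply]
        · have : σ (c₂ a) = i := by simpa [hc, if_neg hxC] using hamem.2
          rw [← this, Equiv.symm_apply_apply]
      have hbval : c₂ b = σ.symm i := by
        rcases hbside with ⟨hbU, hbC⟩ | rfl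
        · have : σ (c₂ b) = i := by simpa [hc, hbC] using hbmem'.2
          rw [← this, Equiv.symm_apply_apply]
        · have : σ (c₂ b) = i := by simpa [hc, if_neg hxC] using hbmem'.2
          rw [← this, Equiv.symm_apply_apply]
      have haery : a ∈ Finset.univ.erase y₀ := by
        refine Finset.mem_erase.mpr ⟨?_, Finset.mem_univ _⟩
        rintro rfl
        rcases haside with ⟨haU, haC⟩ | rfl
        · exact haC hy₀C
        · exact hy₀x rfl
      have hbery : b ∈ Finset.univ.erase y₀ := by
        refine Finset.mem_erase.mpr ⟨?_, Finset.mem_univ _⟩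
        rintro rfl
        rcases hbside with ⟨hbU, hbC⟩ | rfl
        · exact hbC hy₀C
        · exact hy₀x rfl
      exact ⟨Finset.mem_filter.mpr ⟨haery, haval⟩, Finset.mem_filter.mpr ⟨hbery, hbval⟩, hab⟩

end Stmt8Aux5
section Stmt8Aux6

open Relation

variable {V : Type*} [Fintype V] [DecidableEq V]

lemma exists_free_color {m : ℕ} (s : Finset (Fin m)) (h : s.card < m) :
    ∃ i, i ∉ s := by
  by_contra hno
  push_neg at hno
  have hs : s = Finset.univ := Finset.eq_univ_iff_forall.mpr hno
  rw [hs, Finset.card_univ, Fintype.card_fin] at h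
  exact lt_irrefl _ h

lemma filter_insert_update {m : ℕ} (c : V → Fin m) {x : V} {P : Finset V} (hx : x ∉ P)
    (i j : Fin m) :
    (insert x P).filter (fun v => Function.update c x i v = j) =
      if j = i then insert x (P.filter (fun v => c v = j))
      else P.filter (fun v => c v = j) := by
  ext y
  by_cases hyx : y = x
  · subst hyx
    simp only [Finset.mem_filter, Finset.mem_insert, Function.update_self]
    by_cases hji : j = i
    · simp [hji]
    · simp [hji, Ne.symm hji, hx]
  · simp only [Finset.mem_filter, Finset.mem_insert, Function.update_apply, if_neg hyx]
    by_cases hji : j = i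
    · simp [hji, hyx]
    · simp [hji, hyx]

/-- extend an acyclic coloring by a new vertex with a safe color -/
lemma extend_col {A : V → V → Prop} (hirr : ∀ x, ¬ A x x) {m : ℕ} {P : Finset V}
    {c : V → Fin m} (hP : ∀ j, AcyclicOn A (P.filter (fun v => c v = j)))
    {x : V} (hx : x ∉ P) {i : Fin m}
    (hsafe : (∀ y ∈ P, c y = i → ¬ A x y) ∨ (∀ y ∈ P, c y = i → ¬ A y x)) :
    ∀ j, AcyclicOn A ((insert x P).filter (fun v => Function.update c x i v = j)) := by
  intro j
  rw [filter_insert_update c hx i j]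
  by_cases hji : j = i
  · rw [if_pos hji]
    subst hji
    have hxf : x ∉ P.filter (fun v => c v = j) := fun h => hx (Finset.mem_filter.mp h).1
    rcases hsafe with hout | hin
    · exact acyclicOn_insert_out hirr (hP j)
        (fun y hy => hout y (Finset.mem_filter.mp hy).1 (Finset.mem_filter.mp hy).2)
    · exact acyclicOn_insert_in hirr (hP j)
        (fun y hy => hin y (Finset.mem_filter.mp hy).1 (Finset.mem_filter.mp hy).2)
  · rw [if_neg hji]
    exact hP j

/-- a vertex with an unplaced neighbour has a safe color -/
lemma exists_safe_color {A : V → V → Prop} [DecidableRel A] {m : ℕ}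
    (hdegout : ∀ x : V, (Finset.univ.filter (fun y => A x y)).card = m)
    (hdegin : ∀ x : V, (Finset.univ.filter (fun y => A y x)).card = m)
    {P : Finset V} (c : V → Fin m) {x w : V} (hw : w ∉ P) (hadj : Adj A x w) :
    ∃ i, (∀ y ∈ P, c y = i → ¬ A x y) ∨ (∀ y ∈ P, c y = i → ¬ A y x) := by
  rcases hadj with hxw | hwx
  · -- out-neighbour w unplaced
    have hsub : P.filter (fun y => A x y) ⊆ (Finset.univ.filter (fun y => A x y)).erase w := by
      intro y hy
      rcases Finset.mem_filter.mp hy with ⟨hyP, hyA⟩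
      refine Finset.mem_erase.mpr ⟨?_, Finset.mem_filter.mpr ⟨Finset.mem_univ _, hyA⟩⟩
      rintro rfl; exact hw hyP
    have hcard : ((P.filter (fun y => A x y)).image c).card < m := by
      calc ((P.filter (fun y => A x y)).image c).card
          ≤ (P.filter (fun y => A x y)).card := Finset.card_image_le
        _ ≤ ((Finset.univ.filter (fun y => A x y)).erase w).card := Finset.card_le_card hsub
        _ = (Finset.univ.filter (fun y => A x y)).card - 1 :=
            Finset.card_erase_of_mem (Finset.mem_filter.mpr ⟨Finset.mem_univ _, hxw⟩)
        _ < m := by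
            rw [hdegout x]
            have : 1 ≤ m := by
              rw [← hdegout x]
              exact Finset.card_pos.mpr ⟨w, Finset.mem_filter.mpr ⟨Finset.mem_univ _, hxw⟩⟩
            omega
    obtain ⟨i, hi⟩ := exists_free_color _ hcard
    refine ⟨i, Or.inl fun y hy hcy hA => hi ?_⟩
    exact Finset.mem_image.mpr ⟨y, Finset.mem_filter.mpr ⟨hy, hA⟩, hcy⟩
  · -- in-neighbour w unplaced
    have hsub : P.filter (fun y => A y x) ⊆ (Finset.univ.filter (fun y => A y x)).erase w := by
      intro y hy
      rcases Finset.mem_filter.mp hy with ⟨hyP, hyA⟩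
      refine Finset.mem_erase.mpr ⟨?_, Finset.mem_filter.mpr ⟨Finset.mem_univ _, hyA⟩⟩
      rintro rfl; exact hw hyP
    have hcard : ((P.filter (fun y => A y x)).image c).card < m := by
      calc ((P.filter (fun y => A y x)).image c).card
          ≤ (P.filter (fun y => A y x)).card := Finset.card_image_le
        _ ≤ ((Finset.univ.filter (fun y => A y x)).erase w).card := Finset.card_le_card hsub
        _ = (Finset.univ.filter (fun y => A y x)).card - 1 :=
            Finset.card_erase_of_mem (Finset.mem_filter.mpr ⟨Finset.mem_univ _, hwx⟩)
        _ < m := by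
            rw [hdegin x]
            have : 1 ≤ m := by
              rw [← hdegin x]
              exact Finset.card_pos.mpr ⟨w, Finset.mem_filter.mpr ⟨Finset.mem_univ _, hwx⟩⟩
            omega
    obtain ⟨i, hi⟩ := exists_free_color _ hcard
    refine ⟨i, Or.inr fun y hy hcy hA => hi ?_⟩
    exact Finset.mem_image.mpr ⟨y, Finset.mem_filter.mpr ⟨hy, hA⟩, hcy⟩

end Stmt8Aux6
section Stmt8Aux7

open Relation

variable {V : Type*} [Fintype V] [DecidableEq V]

lemma pair_acyclic {A : V → V → Prop} (hor : Oriented A) (u u' : V) :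
    AcyclicOn A (insert u (insert u' (∅ : Finset V))) := by
  have hirr := oriented_irrefl hor
  have hsing : AcyclicOn A (insert u' (∅ : Finset V)) := by
    apply acyclicOn_of_subsingleton hirr
    simp
  by_cases h : A u u'
  · refine acyclicOn_insert_in hirr hsing ?_
    intro y hy
    rcases Finset.mem_insert.mp hy with rfl | hy'
    · exact hor u y h
    · exact absurd hy' (Finset.notMem_empty y)
  · refine acyclicOn_insert_out hirr hsing ?_
    intro y hy
    rcases Finset.mem_insert.mp hy with rfl | hy'
    · exact h
    · exact absurd hy' (Finset.notMem_empty y)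

lemma case_good {A : V → V → Prop} [DecidableRel A] (hor : Oriented A) {m : ℕ}
    (hdegout : ∀ x : V, (Finset.univ.filter (fun y => A x y)).card = m)
    (hdegin : ∀ x : V, (Finset.univ.filter (fun y => A y x)).card = m)
    {v u u' : V} (huu : u ≠ u')
    (hpair : (A v u ∧ A v u') ∨ (A u v ∧ A u' v))
    (hconn : ∀ a ∈ (Finset.univ \ {u, u'} : Finset V), ∀ b ∈ (Finset.univ \ {u, u'} : Finset V),
      ReachOn A (Finset.univ \ {u, u'}) a b) :
    Colorable A (Finset.univ : Finset V) m := by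
  classical
  have hirr := oriented_irrefl hor
  have hm : 1 ≤ m := by
    rcases hpair with ⟨h1, -⟩ | ⟨h1, -⟩
    · rw [← hdegout v]
      exact Finset.card_pos.mpr ⟨u, Finset.mem_filter.mpr ⟨Finset.mem_univ _, h1⟩⟩
    · rw [← hdegin v]
      exact Finset.card_pos.mpr ⟨u, Finset.mem_filter.mpr ⟨Finset.mem_univ _, h1⟩⟩
  have hvu : v ≠ u := by
    rcases hpair with ⟨h1, -⟩ | ⟨h1, -⟩
    · rintro rfl; exact hirr v h1
    · rintro rfl; exact hirr v h1
  have hvu' : v ≠ u' := by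
    rcases hpair with ⟨-, h1⟩ | ⟨-, h1⟩
    · rintro rfl; exact hirr v h1
    · rintro rfl; exact hirr v h1
  set U : Finset V := Finset.univ \ {u, u'} with hU
  have hvU : v ∈ U := by
    simp only [hU, Finset.mem_sdiff, Finset.mem_univ, true_and, Finset.mem_insert,
      Finset.mem_singleton]
    push_neg
    exact ⟨hvu, hvu'⟩
  set M : Finset V := U.erase v with hM
  -- main greedy induction
  have MAIN : ∀ n (T : Finset V), T ⊆ M → T.card = n →
      ∃ c : V → Fin m, c u = c u' ∧
        ∀ j, AcyclicOn A ((insert u (insert u' T)).filter (fun y => c y = j)) := by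
    intro n
    induction n using Nat.strong_induction_on with
    | _ n ih =>
      intro T hTM hTn
      rcases Finset.eq_empty_or_nonempty T with rfl | hTne
      · refine ⟨fun _ => ⟨0, hm⟩, rfl, fun j => ?_⟩
        exact acyclicOn_mono (Finset.filter_subset _ _) (pair_acyclic hor u u')
      · -- peel a vertex with an unplaced neighbour
        obtain ⟨t, htT⟩ := hTne
        have htU : t ∈ U := Finset.mem_of_mem_erase (hTM htT)
        have hvT : v ∉ T := fun h => (Finset.ne_of_mem_erase (hTM h)) rfl
        obtain ⟨x, hxT, w, hwU, hwT, hadj, hxU⟩ :=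
          exists_exit (hconn t htU v hvU) htT hvT
        have hx_card : (T.erase x).card < n := by
          rw [← hTn]
          exact Finset.card_erase_lt_of_mem hxT
        obtain ⟨c, hcuu', hc⟩ := ih _ hx_card (T.erase x)
          ((Finset.erase_subset _ _).trans hTM) rfl
        have hxM : x ∈ M := hTM hxT
        have hxu : x ≠ u := by
          have := Finset.mem_of_mem_erase hxM
          simp only [hU, Finset.mem_sdiff, Finset.mem_insert, Finset.mem_singleton] at this
          exact fun h => this.2 (Or.inl h)
        have hxu' : x ≠ u' := by
          have := Finset.mem_of_mem_erase hxM
          simp only [hU, Finset.mem_sdiff, Finset.mem_insert, Finset.mem_singleton] at this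
          exact fun h => this.2 (Or.inr h)
        have hxP : x ∉ insert u (insert u' (T.erase x)) := by
          simp only [Finset.mem_insert]
          push_neg
          exact ⟨hxu, hxu', Finset.notMem_erase x T⟩
        have hwP : w ∉ insert u (insert u' (T.erase x)) := by
          simp only [Finset.mem_insert]
          push_neg
          have hw' : w ∉ ({u, u'} : Finset V) := (Finset.mem_sdiff.mp hwU).2
          simp only [Finset.mem_insert, Finset.mem_singleton] at hw'
          push_neg at hw'
          exact ⟨hw'.1, hw'.2, fun h => hwT (Finset.mem_of_mem_erase h)⟩
        obtain ⟨i, hsafe⟩ := exists_safe_color hdegout hdegin c hwP hadj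
        have hext := extend_col hirr hc hxP hsafe
        have hset : insert x (insert u (insert u' (T.erase x))) = insert u (insert u' T) := by
          rw [Finset.insert_comm x u, Finset.insert_comm x u', Finset.insert_erase hxT]
        rw [hset] at hext
        refine ⟨Function.update c x i, ?_, hext⟩
        rw [Function.update_apply, Function.update_apply, if_neg (Ne.symm hxu),
          if_neg (Ne.symm hxu')]
        exact hcuu'
  obtain ⟨c, hcuu', hc⟩ := MAIN M.card M (le_refl _) rfl
  have hPeq : insert u (insert u' M) = Finset.univ.erase v := by
    ext y
    simp only [Finset.mem_insert, hM, Finset.mem_erase, hU, Finset.mem_sdiff,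
      Finset.mem_univ, true_and, Finset.mem_insert, Finset.mem_singleton]
    constructor
    · rintro (rfl | rfl | ⟨hyv, hy⟩)
      · exact ⟨Ne.symm hvu, trivial⟩
      · exact ⟨Ne.symm hvu', trivial⟩
      · exact ⟨hyv, trivial⟩
    · rintro ⟨hyv, -⟩
      by_cases hyu : y = u
      · exact Or.inl hyu
      by_cases hyu' : y = u'
      · exact Or.inr (Or.inl hyu')
      · exact Or.inr (Or.inr ⟨hyv, by push_neg; exact ⟨hyu, hyu'⟩⟩)
  rw [hPeq] at hc
  -- final insertion of v
  have hvP : v ∉ Finset.univ.erase v := Finset.notMem_erase v _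
  have huP : u ∈ Finset.univ.erase v :=
    Finset.mem_erase.mpr ⟨Ne.symm hvu, Finset.mem_univ _⟩
  have hu'P : u' ∈ Finset.univ.erase v :=
    Finset.mem_erase.mpr ⟨Ne.symm hvu', Finset.mem_univ _⟩
  have hfinal : ∃ i, (∀ y ∈ Finset.univ.erase v, c y = i → ¬ A v y) ∨
      (∀ y ∈ Finset.univ.erase v, c y = i → ¬ A y v) := by
    rcases hpair with ⟨h1, h2⟩ | ⟨h1, h2⟩
    · -- all out-neighbours placed, but u, u' share a color
      have himage : (((Finset.univ.erase v).filter (fun y => A v y)).image c).card < m := by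
        have hsub : ((Finset.univ.erase v).filter (fun y => A v y)).image c ⊆
            (((Finset.univ.erase v).filter (fun y => A v y)).erase u').image c := by
          intro j hj
          rcases Finset.mem_image.mp hj with ⟨y, hy, hyj⟩
          by_cases hyu' : y = u'
          · subst hyu'
            refine Finset.mem_image.mpr ⟨u, ?_, by rw [← hyj, hcuu']⟩
            exact Finset.mem_erase.mpr ⟨huu, Finset.mem_filter.mpr ⟨huP, h1⟩⟩
          · exact Finset.mem_image.mpr ⟨y, Finset.mem_erase.mpr ⟨hyu', hy⟩, hyj⟩
        have hcard1 : (((Finset.univ.erase v).filter (fun y => A v y)).erase u').card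
            = ((Finset.univ.erase v).filter (fun y => A v y)).card - 1 :=
          Finset.card_erase_of_mem (Finset.mem_filter.mpr ⟨hu'P, h2⟩)
        have hcard2 : ((Finset.univ.erase v).filter (fun y => A v y)).card ≤ m := by
          rw [← hdegout v]
          apply Finset.card_le_card
          exact Finset.filter_subset_filter _ (Finset.erase_subset _ _)
        calc (((Finset.univ.erase v).filter (fun y => A v y)).image c).card
            ≤ ((((Finset.univ.erase v).filter (fun y => A v y)).erase u').image c).card :=
              Finset.card_le_card hsub
          _ ≤ (((Finset.univ.erase v).filter (fun y => A v y)).erase u').card :=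
              Finset.card_image_le
          _ = ((Finset.univ.erase v).filter (fun y => A v y)).card - 1 := hcard1
          _ < m := by omega
      obtain ⟨i, hi⟩ := exists_free_color _ himage
      refine ⟨i, Or.inl fun y hy hcy hA => hi ?_⟩
      exact Finset.mem_image.mpr ⟨y, Finset.mem_filter.mpr ⟨hy, hA⟩, hcy⟩
    · -- all in-neighbours placed, but u, u' share a color
      have himage : (((Finset.univ.erase v).filter (fun y => A y v)).image c).card < m := by
        have hsub : ((Finset.univ.erase v).filter (fun y => A y v)).image c ⊆
            (((Finset.univ.erase v).filter (fun y => A y v)).erase u').image c := by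
          intro j hj
          rcases Finset.mem_image.mp hj with ⟨y, hy, hyj⟩
          by_cases hyu' : y = u'
          · subst hyu'
            refine Finset.mem_image.mpr ⟨u, ?_, by rw [← hyj, hcuu']⟩
            exact Finset.mem_erase.mpr ⟨huu, Finset.mem_filter.mpr ⟨huP, h1⟩⟩
          · exact Finset.mem_image.mpr ⟨y, Finset.mem_erase.mpr ⟨hyu', hy⟩, hyj⟩
        have hcard1 : (((Finset.univ.erase v).filter (fun y => A y v)).erase u').card
            = ((Finset.univ.erase v).filter (fun y => A y v)).card - 1 :=
          Finset.card_erase_of_mem (Finset.mem_filter.mpr ⟨hu'P, h2⟩)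
        have hcard2 : ((Finset.univ.erase v).filter (fun y => A y v)).card ≤ m := by
          rw [← hdegin v]
          apply Finset.card_le_card
          exact Finset.filter_subset_filter _ (Finset.erase_subset _ _)
        calc (((Finset.univ.erase v).filter (fun y => A y v)).image c).card
            ≤ ((((Finset.univ.erase v).filter (fun y => A y v)).erase u').image c).card :=
              Finset.card_le_card hsub
          _ ≤ (((Finset.univ.erase v).filter (fun y => A y v)).erase u').card :=
              Finset.card_image_le
          _ = ((Finset.univ.erase v).filter (fun y => A y v)).card - 1 := hcard1
          _ < m := by omega
      obtain ⟨i, hi⟩ := exists_free_color _ himage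
      refine ⟨i, Or.inr fun y hy hcy hA => hi ?_⟩
      exact Finset.mem_image.mpr ⟨y, Finset.mem_filter.mpr ⟨hy, hA⟩, hcy⟩
  obtain ⟨i, hsafe⟩ := hfinal
  have hext := extend_col hirr hc hvP hsafe
  rw [Finset.insert_erase (Finset.mem_univ v)] at hext
  exact ⟨Function.update c v i, hext⟩

end Stmt8Aux7
section Stmt8Aux8

open Relation

variable {V : Type*} [Fintype V] [DecidableEq V]

/-- a reach path within a component transfers to any superset of the component -/
lemma reach_transfer {A : V → V → Prop} {U U' : Finset V} {y : V}
    (hsub : compF A U y ⊆ U') :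
    ∀ z, ReachOn A U y z → z ∈ U → ReachOn A U' y z := by
  intro z hr
  induction hr with
  | refl => intro _; exact reachOn_refl y
  | tail h1 h2 ih =>
    rename_i mid fin
    intro hfinU
    have hmidC : mid ∈ compF A U y := mem_compF.mpr ⟨h2.1, h1⟩
    have hfinC : fin ∈ compF A U y := mem_compF.mpr ⟨hfinU, h1.tail h2⟩
    exact (ih h2.1).tail ⟨hsub hmidC, hsub hfinC, h2.2.2⟩

/-- every component of `univ \ {p,q}` attaches to `p` (when no single vertex disconnects) -/
lemma comp_attaches {A : V → V → Prop} (hnc : ∀ x : V, ¬ DisconnOn A (Finset.univ.erase x))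
    {p q : V} (hpq : p ≠ q) {y : V} (hy : y ∈ (Finset.univ \ {p, q} : Finset V)) :
    ∃ w ∈ compF A (Finset.univ \ {p, q}) y, Adj A w p := by
  by_contra hno
  push_neg at hno
  set U : Finset V := Finset.univ \ {p, q} with hU
  apply hnc q
  have hyq : y ≠ q := by
    have := (Finset.mem_sdiff.mp hy).2
    simp only [Finset.mem_insert, Finset.mem_singleton] at this
    push_neg at this
    exact this.2
  refine ⟨y, Finset.mem_erase.mpr ⟨hyq, Finset.mem_univ _⟩,
    p, Finset.mem_erase.mpr ⟨hpq, Finset.mem_univ _⟩, fun hr => ?_⟩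
  -- any reach within `univ.erase q` from y stays in the component
  have key : ∀ c, ReachOn A (Finset.univ.erase q) y c → c ∈ compF A U y := by
    intro c hc
    induction hc with
    | refl => exact self_mem_compF hy
    | tail h1 h2 ih =>
      rename_i mid fin
      have hmidC := ih
      by_cases hfp : fin = p
      · exact absurd (hfp ▸ h2.2.2) (hno mid hmidC)
      · have hfinU : fin ∈ U := by
          simp only [hU, Finset.mem_sdiff, Finset.mem_univ, true_and, Finset.mem_insert,
            Finset.mem_singleton]
          push_neg
          exact ⟨hfp, Finset.ne_of_mem_erase h2.2.1⟩
        exact compF_closed hmidC hfinU h2.2.2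
  have := key p hr
  have hpU : p ∉ U := by
    simp [hU]
  exact hpU (compF_subset this)

end Stmt8Aux8
section Stmt8Aux9

open Relation

variable {V : Type*} [Fintype V] [DecidableEq V]

lemma mem_sdiff_pair {p q y : V} : y ∈ (Finset.univ \ {p, q} : Finset V) ↔ y ≠ p ∧ y ≠ q := by
  simp only [Finset.mem_sdiff, Finset.mem_univ, true_and, Finset.mem_insert,
    Finset.mem_singleton]
  push_neg
  exact Iff.rfl

lemma case_frag {A : V → V → Prop} [DecidableRel A] (hor : Oriented A) {m : ℕ} (hm : 2 ≤ m)
    (hdegout : ∀ x : V, (Finset.univ.filter (fun y => A x y)).card = m)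
    (hdegin : ∀ x : V, (Finset.univ.filter (fun y => A y x)).card = m)
    (hnc : ∀ x : V, ¬ DisconnOn A (Finset.univ.erase x))
    (hstar : ∀ z a b : V, a ≠ b → ((A z a ∧ A z b) ∨ (A a z ∧ A b z)) →
      DisconnOn A (Finset.univ \ {a, b}))
    (hstart : ∃ p q : V, p ≠ q ∧ DisconnOn A (Finset.univ \ {p, q})) :
    False := by
  classical
  have hirr := oriented_irrefl hor
  set Sset : Set ℕ := {n | ∃ p q y y₂ : V, p ≠ q ∧ y ∈ (Finset.univ \ {p, q} : Finset V) ∧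
      y₂ ∈ (Finset.univ \ {p, q} : Finset V) ∧ y₂ ∉ compF A (Finset.univ \ {p, q}) y ∧
      n = (compF A (Finset.univ \ {p, q}) y).card} with hSset
  have hSne : Sset.Nonempty := by
    obtain ⟨p, q, hpq, s, hs, t, ht, hnr⟩ := hstart
    exact ⟨_, p, q, s, t, hpq, hs, ht, fun h => hnr (reach_of_mem_compF h), rfl⟩
  set n₀ := sInf Sset with hn₀def
  have hmem := Nat.sInf_mem hSne
  have hmin : ∀ n ∈ Sset, n₀ ≤ n := fun n hn => Nat.sInf_le hn
  -- the core descent argument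
  have core : ∀ (p q y₀ y₁ : V), p ≠ q → y₀ ∈ (Finset.univ \ {p, q} : Finset V) →
      y₁ ∈ (Finset.univ \ {p, q} : Finset V) → y₁ ∉ compF A (Finset.univ \ {p, q}) y₀ →
      (compF A (Finset.univ \ {p, q}) y₀).card = n₀ →
      ∀ a b : V, a ≠ b → a ∈ compF A (Finset.univ \ {p, q}) y₀ →
      (b ∈ compF A (Finset.univ \ {p, q}) y₀ ∨ b = p) →
      DisconnOn A (Finset.univ \ {a, b}) → False := by
    intro p q y₀ y₁ hpq hy₀ hy₁ hy₁C hcard a b hab haC hb hD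
    set U : Finset V := Finset.univ \ {p, q} with hU
    set C : Finset V := compF A U y₀ with hC
    set U' : Finset V := Finset.univ \ {a, b} with hU'
    have hCsubU : C ⊆ U := compF_subset
    have hpU : p ∉ U := fun h => (mem_sdiff_pair.mp h).1 rfl
    have hqU : q ∉ U := fun h => (mem_sdiff_pair.mp h).2 rfl
    have haU : a ∈ U := hCsubU haC
    have haq : a ≠ q := (mem_sdiff_pair.mp haU).2
    have hap : a ≠ p := (mem_sdiff_pair.mp haU).1
    have hbq : b ≠ q := by
      rcases hb with hbC | rfl
      · exact (mem_sdiff_pair.mp (hCsubU hbC)).2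
      · exact hpq
    have hqU' : q ∈ U' := mem_sdiff_pair.mpr ⟨Ne.symm haq, Ne.symm hbq⟩
    -- other components of U avoid C and live inside U'
    have hdisj : ∀ y, y ∈ U → y ∉ C → ∀ w, w ∈ compF A U y → w ∉ C := by
      intro y hyU hyC w hw hwC
      rcases mem_compF.mp hw with ⟨hwU, hr1⟩
      rcases mem_compF.mp hwC with ⟨-, hr2⟩
      exact hyC (mem_compF.mpr ⟨hyU, hr2.trans (reachOn_symm hr1)⟩)
    have hcomp_sub_U' : ∀ y, y ∈ U → y ∉ C → compF A U y ⊆ U' := by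
      intro y hyU hyC w hw
      have hwU : w ∈ U := compF_subset hw
      have hwC : w ∉ C := hdisj y hyU hyC w hw
      refine mem_sdiff_pair.mpr ⟨fun h => hwC (h ▸ haC), ?_⟩
      rcases hb with hbC | rfl
      · exact fun h => hwC (h ▸ hbC)
      · exact fun h => hpU (h ▸ hwU)
    -- everything outside C reaches q within U'
    have hswapset : (Finset.univ \ {q, p} : Finset V) = Finset.univ \ {p, q} := by
      rw [Finset.pair_comm]
    have hattach_q : ∀ y, y ∈ U → ∃ w ∈ compF A U y, Adj A w q := by
      intro y hyU
      have := comp_attaches hnc (Ne.symm hpq) (y := y) (by rw [hswapset]; exact hyU)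
      rw [hswapset] at this
      exact this
    have hattach_p : ∀ y, y ∈ U → ∃ w ∈ compF A U y, Adj A w p := by
      intro y hyU
      exact comp_attaches hnc hpq hyU
    have hBreach : ∀ y, y ∈ U → y ∉ C → ReachOn A U' y q := by
      intro y hyU hyC
      obtain ⟨w, hwcomp, hwq⟩ := hattach_q y hyU
      have h1 : ReachOn A U' y w :=
        reach_transfer (hcomp_sub_U' y hyU hyC) w (reach_of_mem_compF hwcomp) (compF_subset hwcomp)
      exact h1.tail ⟨hcomp_sub_U' y hyU hyC hwcomp, hqU', hwq⟩
    have hpreach : b ≠ p → ReachOn A U' p q := by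
      intro hbp
      have hpU' : p ∈ U' := mem_sdiff_pair.mpr ⟨Ne.symm hap, Ne.symm hbp⟩
      have hy₁U : y₁ ∈ U := hy₁
      obtain ⟨wp, hwpcomp, hwp⟩ := hattach_p y₁ hy₁U
      obtain ⟨wq, hwqcomp, hwq⟩ := hattach_q y₁ hy₁U
      have h1 : ReachOn A U' y₁ wp :=
        reach_transfer (hcomp_sub_U' y₁ hy₁U hy₁C) wp (reach_of_mem_compF hwpcomp)
          (compF_subset hwpcomp)
      have h2 : ReachOn A U' y₁ wq :=
        reach_transfer (hcomp_sub_U' y₁ hy₁U hy₁C) wq (reach_of_mem_compF hwqcomp)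
          (compF_subset hwqcomp)
      have hstep1 : ReachOn A U' p wp :=
        Relation.ReflTransGen.single ⟨hpU', hcomp_sub_U' y₁ hy₁U hy₁C hwpcomp, adj_symm hwp⟩
      have hstep2 : ReachOn A U' wq q :=
        Relation.ReflTransGen.single ⟨hcomp_sub_U' y₁ hy₁U hy₁C hwqcomp, hqU', hwq⟩
      exact ((hstep1.trans (reachOn_symm h1)).trans h2).trans hstep2
    -- find a vertex of U' not reaching q
    obtain ⟨s, hsU', t, htU', hnr⟩ := hD
    have hstar' : ∃ y', y' ∈ U' ∧ ¬ ReachOn A U' y' q := by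
      by_cases hsq : ReachOn A U' s q
      · refine ⟨t, htU', fun htq => hnr (hsq.trans (reachOn_symm htq))⟩
      · exact ⟨s, hsU', hsq⟩
    obtain ⟨y', hy'U', hy'q⟩ := hstar'
    set Y : Finset V := compF A U' y' with hY
    have hqY : q ∉ Y := fun h => hy'q (reach_of_mem_compF h)
    have hYsub : Y ⊆ C.erase a := by
      intro w hw
      have hwU' : w ∈ U' := compF_subset hw
      have hwreach : ReachOn A U' y' w := reach_of_mem_compF hw
      have hwq : w ≠ q := fun h => hqY (h ▸ hw)
      have hwp : w ≠ p := by
        rcases hb with hbC | rfl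
        · intro h
          subst h
          exact hy'q (hwreach.trans (hpreach (fun hbp => hpU (hbp ▸ hCsubU hbC))))
        · exact (mem_sdiff_pair.mp hwU').2
      have hwU : w ∈ U := mem_sdiff_pair.mpr ⟨hwp, hwq⟩
      have hwC : w ∈ C := by
        by_contra hwC
        exact hy'q (hwreach.trans (hBreach w hwU hwC))
      exact Finset.mem_erase.mpr ⟨(mem_sdiff_pair.mp hwU').1, hwC⟩
    have hYS : Y.card ∈ Sset := ⟨a, b, y', q, hab, hy'U', hqU', hqY, rfl⟩
    have h1 : n₀ ≤ Y.card := hmin _ hYS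
    have h2 : Y.card ≤ C.card - 1 := by
      calc Y.card ≤ (C.erase a).card := Finset.card_le_card hYsub
        _ = C.card - 1 := Finset.card_erase_of_mem haC
    have h3 : 1 ≤ C.card := Finset.card_pos.mpr ⟨y₀, self_mem_compF hy₀⟩
    rw [hcard] at h2 h3
    omega
  -- now the main dichotomy at the root of the minimum fragment
  obtain ⟨p, q, y₀, y₁, hpq, hy₀, hy₁, hy₁C, hn₀⟩ := hmem
  set U : Finset V := Finset.univ \ {p, q} with hU
  set C : Finset V := compF A U y₀ with hC
  have hNsub : ∀ w, Adj A y₀ w → w = p ∨ w = q ∨ w ∈ C := by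
    intro w hw
    by_cases hwp : w = p
    · exact Or.inl hwp
    by_cases hwq : w = q
    · exact Or.inr (Or.inl hwq)
    · exact Or.inr (Or.inr (compF_closed (self_mem_compF hy₀) (mem_sdiff_pair.mpr ⟨hwp, hwq⟩) hw))
  have hswapset : (Finset.univ \ {q, p} : Finset V) = Finset.univ \ {p, q} := by
    rw [Finset.pair_comm]
  -- helper to finish given a suitable pair
  have finish : ∀ a b : V, a ≠ b → a ∈ C → (b ∈ C ∨ b = p ∨ b = q) →
      DisconnOn A (Finset.univ \ {a, b}) → False := by
    intro a b hab haC hb hD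
    rcases hb with hbC | hbp | hbq
    · exact core p q y₀ y₁ hpq hy₀ hy₁ hy₁C (hn₀.symm) a b hab haC (Or.inl hbC) hD
    · exact core p q y₀ y₁ hpq hy₀ hy₁ hy₁C (hn₀.symm) a b hab haC (Or.inr hbp) hD
    · -- swap the roles of p and q
      refine core q p y₀ y₁ (Ne.symm hpq) (by rw [hswapset]; exact hy₀)
        (by rw [hswapset]; exact hy₁) (by rw [hswapset]; exact hy₁C)
        (by rw [hswapset]; exact hn₀.symm) a b hab (by rw [hswapset]; exact haC)
        (Or.inr hbq) hD
  by_cases hOC : ∃ a ∈ C, A y₀ a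
  · obtain ⟨a, haC, haA⟩ := hOC
    have haNp : a ∈ Finset.univ.filter (fun y => A y₀ y) :=
      Finset.mem_filter.mpr ⟨Finset.mem_univ _, haA⟩
    have hbne : ((Finset.univ.filter (fun y => A y₀ y)).erase a).Nonempty := by
      apply Finset.card_pos.mp
      rw [Finset.card_erase_of_mem haNp, hdegout y₀]
      omega
    obtain ⟨b, hbmem⟩ := hbne
    have hba : b ≠ a := Finset.ne_of_mem_erase hbmem
    have hbA : A y₀ b := (Finset.mem_filter.mp (Finset.mem_of_mem_erase hbmem)).2
    have hD := hstar y₀ a b (Ne.symm hba) (Or.inl ⟨haA, hbA⟩)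
    rcases hNsub b (Or.inl hbA) with hbp | hbq | hbC
    · exact finish a b (Ne.symm hba) haC (Or.inr (Or.inl hbp)) hD
    · exact finish a b (Ne.symm hba) haC (Or.inr (Or.inr hbq)) hD
    · exact finish a b (Ne.symm hba) haC (Or.inl hbC) hD
  · by_cases hIC : ∃ a ∈ C, A a y₀
    · obtain ⟨a, haC, haA⟩ := hIC
      have haNp : a ∈ Finset.univ.filter (fun y => A y y₀) :=
        Finset.mem_filter.mpr ⟨Finset.mem_univ _, haA⟩
      have hbne : ((Finset.univ.filter (fun y => A y y₀)).erase a).Nonempty := by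
        apply Finset.card_pos.mp
        rw [Finset.card_erase_of_mem haNp, hdegin y₀]
        omega
      obtain ⟨b, hbmem⟩ := hbne
      have hba : b ≠ a := Finset.ne_of_mem_erase hbmem
      have hbA : A b y₀ := (Finset.mem_filter.mp (Finset.mem_of_mem_erase hbmem)).2
      have hD := hstar y₀ a b (Ne.symm hba) (Or.inr ⟨haA, hbA⟩)
      rcases hNsub b (Or.inr hbA) with hbp | hbq | hbC
      · exact finish a b (Ne.symm hba) haC (Or.inr (Or.inl hbp)) hD
      · exact finish a b (Ne.symm hba) haC (Or.inr (Or.inr hbq)) hD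
      · exact finish a b (Ne.symm hba) haC (Or.inl hbC) hD
    · -- no neighbours of y₀ in C at all: forced digon
      push_neg at hOC hIC
      have hNout : Finset.univ.filter (fun y => A y₀ y) ⊆ {p, q} := by
        intro w hw
        have hwA : A y₀ w := (Finset.mem_filter.mp hw).2
        rcases hNsub w (Or.inl hwA) with rfl | rfl | hwC
        · exact Finset.mem_insert_self _ _
        · exact Finset.mem_insert.mpr (Or.inr (Finset.mem_singleton_self _))
        · exact absurd hwA (hOC w hwC)
      have hNin : Finset.univ.filter (fun y => A y y₀) ⊆ {p, q} := by
        intro w hw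
        have hwA : A w y₀ := (Finset.mem_filter.mp hw).2
        rcases hNsub w (Or.inr hwA) with rfl | rfl | hwC
        · exact Finset.mem_insert_self _ _
        · exact Finset.mem_insert.mpr (Or.inr (Finset.mem_singleton_self _))
        · exact absurd hwA (hIC w hwC)
      have hcard2 : ({p, q} : Finset V).card = 2 := Finset.card_pair hpq
      have houteq : Finset.univ.filter (fun y => A y₀ y) = {p, q} := by
        apply Finset.eq_of_subset_of_card_le hNout
        rw [hcard2, hdegout y₀]; exact hm
      have hineq : Finset.univ.filter (fun y => A y y₀) = {p, q} := by
        apply Finset.eq_of_subset_of_card_le hNin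
        rw [hcard2, hdegin y₀]; exact hm
      have h1 : A y₀ p := by
        have : p ∈ Finset.univ.filter (fun y => A y₀ y) := by
          rw [houteq]; exact Finset.mem_insert_self _ _
        exact (Finset.mem_filter.mp this).2
      have h2 : A p y₀ := by
        have : p ∈ Finset.univ.filter (fun y => A y y₀) := by
          rw [hineq]; exact Finset.mem_insert_self _ _
        exact (Finset.mem_filter.mp this).2
      exact hor y₀ p h1 h2

end Stmt8Aux9
theorem stmt8 [Fintype V] [DecidableEq V] (A : V → V → Prop) [DecidableRel A]
    (k : ℕ) (hor : Oriented A)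
    (hchi : chiAcyclicOn A Finset.univ = k)
    (hcrit : ∀ v : V, chiAcyclicOn A (Finset.univ.erase v) < k)
    (hdeg : ∀ v : V, outDegOn A Finset.univ v = k - 1 ∧
      inDegOn A Finset.univ v = k - 1) :
    k ≤ 2 := by
  classical
  by_contra hk
  push_neg at hk
  have hirr := oriented_irrefl hor
  set m : ℕ := k - 1 with hmdef
  have hm2 : 2 ≤ m := by omega
  have hmk : m < k := by omega
  have hdegout : ∀ x : V, (Finset.univ.filter (fun y => A x y)).card = m :=
    fun x => (hdeg x).1
  have hdegin : ∀ x : V, (Finset.univ.filter (fun y => A y x)).card = m :=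
    fun x => (hdeg x).2
  have hnotcol : ¬ Colorable A (Finset.univ : Finset V) m := by
    intro h
    have := chi_le_of_colorable h
    omega
  have hcol : ∀ v : V, Colorable A (Finset.univ.erase v) m := by
    intro v
    apply colorable_of_chi_le hirr
    have := hcrit v
    omega
  -- V is nonempty
  rcases isEmpty_or_nonempty V with hemp | hne
  · refine hnotcol ⟨fun v => isEmptyElim v, fun i => ?_⟩
    have : (Finset.univ : Finset V) = ∅ := Finset.univ_eq_empty
    rw [this, Finset.filter_empty]
    exact acyclicOn_empty A
  -- Case 1 : some single vertex disconnects
  by_cases hcut : ∃ x : V, DisconnOn A (Finset.univ.erase x)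
  · obtain ⟨x, hx⟩ := hcut
    exact hnotcol (case_cut hor hcol hx)
  push_neg at hcut
  -- Case 2 : a good pair exists
  by_cases hgood : ∃ v u u' : V, u ≠ u' ∧ ((A v u ∧ A v u') ∨ (A u v ∧ A u' v)) ∧
      ∀ a ∈ (Finset.univ \ {u, u'} : Finset V), ∀ b ∈ (Finset.univ \ {u, u'} : Finset V),
        ReachOn A (Finset.univ \ {u, u'}) a b
  · obtain ⟨v, u, u', huu, hpair, hconn⟩ := hgood
    exact hnotcol (case_good hor hdegout hdegin huu hpair hconn)
  -- Case 3 : every same-type pair disconnects; minimal fragment argument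
  push_neg at hgood
  have hstar : ∀ z a b : V, a ≠ b → ((A z a ∧ A z b) ∨ (A a z ∧ A b z)) →
      DisconnOn A (Finset.univ \ {a, b}) := by
    intro z a b hab hpair
    exact hgood z a b hab hpair
  have hstart : ∃ p q : V, p ≠ q ∧ DisconnOn A (Finset.univ \ {p, q}) := by
    obtain ⟨v₀⟩ := hne
    have hcard : 1 < (Finset.univ.filter (fun y => A v₀ y)).card := by
      rw [hdegout v₀]; omega
    obtain ⟨u, hu, u', hu', huu⟩ := Finset.one_lt_card.mp hcard
    refine ⟨u, u', huu, hstar v₀ u u' huu (Or.inl ⟨(Finset.mem_filter.mp hu).2,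
      (Finset.mem_filter.mp hu').2⟩)⟩
  exact case_frag hor hm2 hdegout hdegin hcut hstar hstart
end

section
/- Let G be an undirected graph and suppose Δ(G) = (s-1) + Σ_{i=1}^s Δ_i for some s ≥ 1 and positive integers Δ_1, …, Δ_s. Then V(G) can be partitioned into s sets V_1, …, V_s such that the subgraph induced on V_i has maximum degree at most Δ_i for each i. -/
open Finset

variable {V : Type*}

section Lovasz
variable {W : Type*} [Fintype W] [DecidableEq W]

/-- Potential function: number of monochromatic ordered adjacent pairs minus
`2 * ∑ i, Δ i * |color class i|`. -/
def lovaszFF (G : SimpleGraph W) [DecidableRel G.Adj] {s : ℕ} (Δ : Fin s → ℕ)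
    (c : W → Fin s) : ℤ :=
  (∑ x, ∑ y, if G.Adj x y ∧ c x = c y then (1:ℤ) else 0)
    - 2 * ∑ i, (Δ i : ℤ) * ∑ x, (if c x = i then (1:ℤ) else 0)

lemma lovasz_sum_pair {v : W} (f : W → W → ℤ) (h0 : ∀ x y, x ≠ v → y ≠ v → f x y = 0)
    (hvv : f v v = 0) : ∑ x, ∑ y, f x y = (∑ y, f v y) + ∑ x, f x v := by
  have h1 : ∀ x : W, x ≠ v → ∑ y, f x y = f x v := by
    intro x hx
    apply Finset.sum_eq_single_of_mem v (Finset.mem_univ v)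
    intro y _ hy; exact h0 x y hx hy
  rw [← Finset.add_sum_erase _ _ (Finset.mem_univ v)]
  congr 1
  rw [Finset.sum_congr rfl (fun x hx => h1 x (Finset.ne_of_mem_erase hx))]
  exact Finset.sum_erase _ hvv

lemma lovaszFF_update (G : SimpleGraph W) [DecidableRel G.Adj] {s : ℕ} (Δ : Fin s → ℕ)
    (c : W → Fin s) (v : W) (j : Fin s) :
    lovaszFF G Δ (Function.update c v j)
      = lovaszFF G Δ c
        + 2 * ((∑ y, if G.Adj v y ∧ c y = j then (1:ℤ) else 0)
            - (∑ y, if G.Adj v y ∧ c y = c v then (1:ℤ) else 0))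
        - 2 * ((Δ j : ℤ) - (Δ (c v) : ℤ)) := by
  set c' := Function.update c v j with hc'
  have hc'v : c' v = j := Function.update_self v j c
  have hc'ne : ∀ x, x ≠ v → c' x = c x := fun x hx => Function.update_of_ne hx j c
  -- Part A
  have partA : (∑ x, ∑ y, if G.Adj x y ∧ c' x = c' y then (1:ℤ) else 0)
      = (∑ x, ∑ y, if G.Adj x y ∧ c x = c y then (1:ℤ) else 0)
        + 2 * ((∑ y, if G.Adj v y ∧ c y = j then (1:ℤ) else 0)
            - (∑ y, if G.Adj v y ∧ c y = c v then (1:ℤ) else 0)) := by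
    set D : W → W → ℤ := fun x y =>
      (if G.Adj x y ∧ c' x = c' y then (1:ℤ) else 0)
        - (if G.Adj x y ∧ c x = c y then (1:ℤ) else 0) with hD
    have h0 : ∀ x y, x ≠ v → y ≠ v → D x y = 0 := by
      intro x y hx hy
      simp only [hD, hc'ne x hx, hc'ne y hy, sub_self]
    have hvv : D v v = 0 := by
      simp [hD, G.irrefl]
    have hrow : ∀ y, D v y = (if G.Adj v y ∧ c y = j then (1:ℤ) else 0)
        - (if G.Adj v y ∧ c y = c v then (1:ℤ) else 0) := by
      intro y
      by_cases hy : y = v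
      · subst hy; simp [hD, G.irrefl]
      · simp only [hD, hc'v, hc'ne y hy]
        congr 2
        all_goals exact propext ⟨fun ⟨h1, h2⟩ => ⟨h1, h2.symm⟩, fun ⟨h1, h2⟩ => ⟨h1, h2.symm⟩⟩
    have hcol : ∀ x, D x v = (if G.Adj v x ∧ c x = j then (1:ℤ) else 0)
        - (if G.Adj v x ∧ c x = c v then (1:ℤ) else 0) := by
      intro x
      by_cases hx : x = v
      · subst hx; simp [hD, G.irrefl]
      · simp only [hD, hc'v, hc'ne x hx, G.adj_comm x v]
    have hsplit := lovasz_sum_pair D h0 hvv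
    have : ∑ x, ∑ y, D x y
        = 2 * ((∑ y, if G.Adj v y ∧ c y = j then (1:ℤ) else 0)
            - (∑ y, if G.Adj v y ∧ c y = c v then (1:ℤ) else 0)) := by
      rw [hsplit]
      rw [Finset.sum_congr rfl (fun y _ => hrow y), Finset.sum_congr rfl (fun x _ => hcol x)]
      rw [Finset.sum_sub_distrib]
      ring
    calc (∑ x, ∑ y, if G.Adj x y ∧ c' x = c' y then (1:ℤ) else 0)
        = (∑ x, ∑ y, if G.Adj x y ∧ c x = c y then (1:ℤ) else 0) + ∑ x, ∑ y, D x y := by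
          simp only [hD, Finset.sum_sub_distrib]; ring
      _ = _ := by rw [this]
  -- Part B
  have partB : (∑ i, (Δ i : ℤ) * ∑ x, (if c' x = i then (1:ℤ) else 0))
      = (∑ i, (Δ i : ℤ) * ∑ x, (if c x = i then (1:ℤ) else 0))
        + ((Δ j : ℤ) - (Δ (c v) : ℤ)) := by
    have hN : ∀ k, (∑ x, if c' x = k then (1:ℤ) else 0)
        = (∑ x, if c x = k then (1:ℤ) else 0)
          + ((if j = k then (1:ℤ) else 0) - (if c v = k then (1:ℤ) else 0)) := by
      intro k
      have hterm : ∀ x, (if c' x = k then (1:ℤ) else 0) - (if c x = k then 1 else 0)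
          = if x = v then ((if j = k then (1:ℤ) else 0) - (if c v = k then 1 else 0)) else 0 := by
        intro x
        by_cases hx : x = v
        · subst hx; simp [hc'v]
        · simp [hc'ne x hx, hx]
      have := Finset.sum_congr rfl (fun x (_ : x ∈ Finset.univ) => hterm x)
      rw [Finset.sum_sub_distrib] at this
      rw [Finset.sum_ite_eq' Finset.univ v] at this
      simp only [Finset.mem_univ, if_true] at this
      linarith
    rw [Finset.sum_congr rfl (fun k _ => by rw [hN k])]
    have e1 : ∑ k, (Δ k : ℤ) * (if j = k then (1:ℤ) else 0) = (Δ j : ℤ) := by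
      simp [mul_ite]
    have e2 : ∑ k, (Δ k : ℤ) * (if c v = k then (1:ℤ) else 0) = (Δ (c v) : ℤ) := by
      simp [mul_ite]
    simp only [mul_add, mul_sub]
    rw [Finset.sum_add_distrib, Finset.sum_sub_distrib, e1, e2]
  simp only [lovaszFF, partA, partB]
  ring

end Lovasz

theorem stmt13 {W : Type*} [Fintype W] [DecidableEq W] (G : SimpleGraph W)
    [DecidableRel G.Adj] (s : ℕ) (hs : 1 ≤ s) (Δ : Fin s → ℕ) (hΔ : ∀ i, 1 ≤ Δ i)
    (hsum : G.maxDegree = (s - 1) + ∑ i, Δ i) :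
    ∃ P : Fin s → Finset W, (∀ i j, i ≠ j → Disjoint (P i) (P j)) ∧
      Finset.univ.biUnion P = Finset.univ ∧
      ∀ i, ∀ v ∈ P i, ((P i).filter (fun w => G.Adj v w)).card ≤ Δ i := by
  obtain ⟨c, -, hmin⟩ := Finset.exists_min_image (Finset.univ : Finset (W → Fin s))
    (lovaszFF G Δ) ⟨fun _ => ⟨0, hs⟩, Finset.mem_univ _⟩
  refine ⟨fun i => Finset.univ.filter (fun v => c v = i), ?_, ?_, ?_⟩
  · intro i j hij
    rw [Finset.disjoint_left]
    intro a hai haj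
    simp only [Finset.mem_filter] at hai haj
    exact hij (hai.2 ▸ haj.2 ▸ rfl)
  · ext v
    simp only [Finset.mem_biUnion, Finset.mem_univ, Finset.mem_filter, iff_true, true_and]
    exact ⟨c v, rfl⟩
  · intro i v hv
    by_contra hbig
    push_neg at hbig
    have hvi : c v = i := (Finset.mem_filter.mp hv).2
    set d : Fin s → ℕ := fun k => (Finset.univ.filter (fun w => G.Adj v w ∧ c w = k)).card
      with hd
    have hdi : Δ i + 1 ≤ d i := by
      have he : (Finset.univ.filter (fun x => c x = i)).filter (fun w => G.Adj v w)
          = Finset.univ.filter (fun w => G.Adj v w ∧ c w = i) := by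
        rw [Finset.filter_filter]
        exact Finset.filter_congr (fun x _ => and_comm)
      rw [he] at hbig
      have hdd : d i = (Finset.univ.filter (fun w => G.Adj v w ∧ c w = i)).card := rfl
      omega
    -- pigeonhole: some class j with d j ≤ Δ j
    have hdegd : ∑ k, d k = G.degree v := by
      have h1 : G.neighborFinset v = Finset.univ.filter (fun w => G.Adj v w) := by
        ext w; simp
      rw [← SimpleGraph.card_neighborFinset_eq_degree, h1,
        Finset.card_eq_sum_card_fiberwise (fun x _ => Finset.mem_univ (c x))]
      exact Finset.sum_congr rfl fun k _ => by rw [Finset.filter_filter]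
    have hdeg : G.degree v ≤ G.maxDegree := G.degree_le_maxDegree v
    have hj : ∃ j, d j ≤ Δ j := by
      by_contra h
      push_neg at h
      have h2 : ∑ k, (Δ k + 1) ≤ ∑ k, d k := Finset.sum_le_sum fun k _ => h k
      rw [Finset.sum_add_distrib, Finset.sum_const, Finset.card_univ, Fintype.card_fin,
        smul_eq_mul, mul_one] at h2
      omega
    obtain ⟨j, hdj⟩ := hj
    -- strict decrease of the potential, contradiction with minimality
    have hle := hmin (Function.update c v j) (Finset.mem_univ _)
    have heq := lovaszFF_update G Δ c v j
    have hsum_d : ∀ k, (∑ y, if G.Adj v y ∧ c y = k then (1:ℤ) else 0) = (d k : ℤ) := by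
      intro k
      rw [Finset.sum_boole]
    rw [hsum_d j, hsum_d (c v), hvi] at heq
    have hdi' : (Δ i : ℤ) + 1 ≤ (d i : ℤ) := by exact_mod_cast hdi
    have hdj' : (d j : ℤ) ≤ (Δ j : ℤ) := by exact_mod_cast hdj
    omega
end
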